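/- arXiv:2203.12343 — 3 statements merged into one kernel-verified Lean document; each statement's English description precedes it below -/
import Mathlib

section
/- Let d ≥ 1 and let J : ℝ^d → (0,∞) be a Borel function. For ε > 0 set J_ε(x) = ε^d J(εx) and assume x ↦ min(1,|x|) J_ε(x) is integrable for every ε > 0. Suppose ℓ(s) = ∫_{|x|>s} J(x) dx is finite for s > 0 and slowly varying at zero, i.e. for every λ > 0, ℓ(λs)/ℓ(s) → 1 as s → 0⁺. Let E ⊂ ℝ^d be a Borel set of finite Lebesgue measure whose covariance function g_E is Lipschitz continuous (this holds whenever E also has finite classical perimeter). Then lim_{ε→0⁺} ℓ(ε)^{−1} Per_{J_ε}(E) = |E|, where Per_{J_ε}(E) = ∫_E ∫_{E^c} J_ε(x − y) dy dx. -/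
open MeasureTheory Filter Topology ENNReal NNReal

/-- The `J`-perimeter `Per_J(E) = ∫_E ∫_{Eᶜ} J(x − y) dy dx`. -/
noncomputable def JPer {d : ℕ} (J : EuclideanSpace ℝ (Fin d) → ℝ)
    (E : Set (EuclideanSpace ℝ (Fin d))) : ℝ≥0∞ :=
  ∫⁻ x in E, ∫⁻ y in Eᶜ, ENNReal.ofReal (J (x - y))

/-- The covariance function `g_E(y) = |E ∩ (E + y)|` of a set `E`. -/
noncomputable def covFn {d : ℕ} (E : Set (EuclideanSpace ℝ (Fin d)))
    (y : EuclideanSpace ℝ (Fin d)) : ℝ≥0∞ :=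
  volume (E ∩ {x | x - y ∈ E})

lemma jper_eq {d : ℕ} (F : EuclideanSpace ℝ (Fin d) → ℝ) (hF : Measurable F)
    (E : Set (EuclideanSpace ℝ (Fin d))) (hE : MeasurableSet E) (hEvol : volume E < ⊤) :
    JPer F E = ∫⁻ z, ENNReal.ofReal (F z) * (volume E - covFn E z) := by
  have hsub : Measurable fun p : EuclideanSpace ℝ (Fin d) × EuclideanSpace ℝ (Fin d) =>
      p.1 - p.2 := measurable_fst.sub measurable_snd
  have step1 : ∀ x : EuclideanSpace ℝ (Fin d),
      ∫⁻ y in Eᶜ, ENNReal.ofReal (F (x - y)) =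
      ∫⁻ z, ENNReal.ofReal (F z) * Set.indicator Eᶜ (fun _ => 1) (x - z) := by
    intro x
    have hmp : MeasurePreserving (fun z : EuclideanSpace ℝ (Fin d) => x - z)
        volume volume := Measure.measurePreserving_sub_left volume x
    have hK : Measurable fun z : EuclideanSpace ℝ (Fin d) =>
        ENNReal.ofReal (F z) * Set.indicator Eᶜ (fun _ => 1) (x - z) :=
      (hF.ennreal_ofReal).mul
        ((measurable_const.indicator hE.compl).comp (measurable_const.sub measurable_id))
    calc ∫⁻ y in Eᶜ, ENNReal.ofReal (F (x - y))
        = ∫⁻ y, Set.indicator Eᶜ (fun y => ENNReal.ofReal (F (x - y))) y := by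
          rw [lintegral_indicator hE.compl]
      _ = ∫⁻ y, ENNReal.ofReal (F (x - y)) * Set.indicator Eᶜ (fun _ => 1) y := by
          congr 1; funext y
          by_cases hy : y ∈ Eᶜ <;>
            simp [Set.indicator_of_mem, Set.indicator_of_notMem, hy]
      _ = ∫⁻ y, (fun z => ENNReal.ofReal (F z) * Set.indicator Eᶜ (fun _ => 1) (x - z)) (x - y) := by
          congr 1; funext y; simp [_root_.sub_sub_cancel]
      _ = ∫⁻ z, ENNReal.ofReal (F z) * Set.indicator Eᶜ (fun _ => 1) (x - z) :=
          hmp.lintegral_comp hK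
  have step2 : JPer F E =
      ∫⁻ z, ENNReal.ofReal (F z) * volume (E ∩ {x | x - z ∈ E}ᶜ) := by
    rw [JPer]
    simp_rw [step1]
    rw [lintegral_lintegral_swap]
    · congr 1; funext z
      rw [lintegral_const_mul' _ _ ENNReal.ofReal_ne_top]
      congr 1
      have : (fun x : EuclideanSpace ℝ (Fin d) => Set.indicator Eᶜ (fun _ => (1:ℝ≥0∞)) (x - z))
          = Set.indicator {x | x - z ∈ Eᶜ} 1 := by
        funext x
        by_cases hx : x - z ∈ E <;>
          simp [Set.indicator_apply, Set.mem_setOf_eq, Set.mem_compl_iff, hx]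
      have hS : MeasurableSet {x : EuclideanSpace ℝ (Fin d) | x - z ∈ Eᶜ} := by
        exact hE.compl.preimage (measurable_sub_const z)
      rw [this, lintegral_indicator_one hS, Measure.restrict_apply hS, Set.inter_comm]
      rfl
    · exact ((hF.ennreal_ofReal.comp measurable_snd).mul
        ((measurable_const.indicator hE.compl).comp hsub)).aemeasurable
  rw [step2]
  congr 1; funext z
  congr 1
  have h1 : E ∩ {x | x - z ∈ E}ᶜ = E \ (E ∩ {x | x - z ∈ E}) := by
    rw [Set.diff_self_inter]; rfl
  have hSz : MeasurableSet {x : EuclideanSpace ℝ (Fin d) | x - z ∈ E} := by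
    exact hE.preimage (measurable_sub_const z)
  rw [h1, measure_diff Set.inter_subset_left
    ((hE.inter hSz).nullMeasurableSet)
    (lt_of_le_of_lt (measure_mono Set.inter_subset_left) hEvol).ne]
  rfl

lemma lintegral_scale {d : ℕ} {f : EuclideanSpace ℝ (Fin d) → ℝ≥0∞} (hf : Measurable f)
    {ε : ℝ} (hε : ε ≠ 0) :
    ∫⁻ z, f (ε • z) = ENNReal.ofReal |((ε ^ d)⁻¹ : ℝ)| * ∫⁻ w, f w := by
  have h := Measure.map_addHaar_smul (μ := (volume : Measure (EuclideanSpace ℝ (Fin d)))) hε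
  rw [finrank_euclideanSpace_fin] at h
  rw [← lintegral_map hf (measurable_const_smul ε), h, lintegral_smul_measure, smul_eq_mul]

lemma covFn_cont {d : ℕ} {E : Set (EuclideanSpace ℝ (Fin d))} (hEvol : volume E < ⊤)
    {L : ℝ≥0} (hL : LipschitzWith L fun y => (covFn E y).toReal) :
    Continuous (covFn E) := by
  have h1 : ∀ y, covFn E y ≠ ⊤ := fun y =>
    (lt_of_le_of_lt (measure_mono Set.inter_subset_left) hEvol).ne
  have h2 : Continuous fun y => ENNReal.ofReal ((covFn E y).toReal) :=
    ENNReal.continuous_ofReal.comp hL.continuous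
  have : (fun y => ENNReal.ofReal ((covFn E y).toReal)) = covFn E := by
    funext y; rw [ENNReal.ofReal_toReal (h1 y)]
  rwa [this] at h2

lemma covFn_zero {d : ℕ} (E : Set (EuclideanSpace ℝ (Fin d))) : covFn E 0 = volume E := by
  have : {x : EuclideanSpace ℝ (Fin d) | x - 0 ∈ E} = E := by
    ext x; simp
  rw [covFn, this, Set.inter_self]

lemma covFn_le {d : ℕ} (E : Set (EuclideanSpace ℝ (Fin d))) (z : EuclideanSpace ℝ (Fin d)) :
    covFn E z ≤ volume E := measure_mono Set.inter_subset_left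

lemma psi_le {d : ℕ} {E : Set (EuclideanSpace ℝ (Fin d))} (hEvol : volume E < ⊤)
    {L : ℝ≥0} (hL : LipschitzWith L fun y => (covFn E y).toReal)
    (z : EuclideanSpace ℝ (Fin d)) :
    volume E - covFn E z ≤ ENNReal.ofReal (L * ‖z‖) := by
  have hfin : covFn E z ≠ ⊤ :=
    (lt_of_le_of_lt (measure_mono Set.inter_subset_left) hEvol).ne
  have hd := hL.dist_le_mul z 0
  rw [dist_zero_right] at hd
  have h0 : (covFn E 0).toReal = (volume E).toReal := by rw [covFn_zero]
  have hkey : (volume E).toReal ≤ (covFn E z).toReal + L * ‖z‖ := by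
    rw [← h0]
    have := abs_sub_abs_le_abs_sub ((covFn E 0).toReal) ((covFn E z).toReal)
    have h2 : (covFn E 0).toReal - (covFn E z).toReal ≤ L * ‖z‖ := by
      have h3 : |(covFn E 0).toReal - (covFn E z).toReal| ≤ L * ‖z‖ := by
        rwa [Real.dist_eq, abs_sub_comm] at hd
      exact le_trans (le_abs_self _) h3
    linarith
  rw [tsub_le_iff_right]
  calc volume E = ENNReal.ofReal ((volume E).toReal) := (ENNReal.ofReal_toReal hEvol.ne).symm
    _ ≤ ENNReal.ofReal ((covFn E z).toReal + L * ‖z‖) := ENNReal.ofReal_le_ofReal hkey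
    _ = ENNReal.ofReal ((covFn E z).toReal) + ENNReal.ofReal (L * ‖z‖) := by
        rw [ENNReal.ofReal_add ENNReal.toReal_nonneg (by positivity)]
    _ = covFn E z + ENNReal.ofReal (L * ‖z‖) := by rw [ENNReal.ofReal_toReal hfin]
    _ = ENNReal.ofReal (↑L * ‖z‖) + covFn E z := by rw [add_comm]

lemma covFn_vanish {d : ℕ} {E : Set (EuclideanSpace ℝ (Fin d))} (hE : MeasurableSet E)
    (hEvol : volume E < ⊤) {η : ℝ≥0∞} (hη : 0 < η) :
    ∃ R : ℝ, 1 ≤ R ∧ ∀ z : EuclideanSpace ℝ (Fin d), R ≤ ‖z‖ → covFn E z ≤ η := by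
  set s : ℕ → Set (EuclideanSpace ℝ (Fin d)) := fun n => E \ Metric.closedBall 0 n with hs
  have hmeas : ∀ n, NullMeasurableSet (s n) volume := fun n =>
    (hE.diff Metric.isClosed_closedBall.measurableSet).nullMeasurableSet
  have hanti : Antitone s := fun m n hmn =>
    Set.diff_subset_diff_right (Metric.closedBall_subset_closedBall (by exact_mod_cast hmn))
  have hfin : ∃ n, volume (s n) ≠ ⊤ := ⟨0, (lt_of_le_of_lt (measure_mono Set.diff_subset) hEvol).ne⟩
  have hinter : ⋂ n, s n = ∅ := by
    ext x
    simp only [Set.mem_iInter, Set.mem_empty_iff_false, iff_false, not_forall, hs]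
    obtain ⟨n, hn⟩ := exists_nat_ge ‖x‖
    exact ⟨n, fun h => h.2 (by simpa [Metric.mem_closedBall, dist_zero_right] using hn)⟩
  have htend := tendsto_measure_iInter_atTop hmeas hanti hfin
  rw [hinter, measure_empty] at htend
  have hev := htend.eventually_lt_const (ENNReal.half_pos hη.ne' : (0:ℝ≥0∞) < η / 2)
  obtain ⟨n, hn⟩ := hev.exists
  refine ⟨max 1 (2 * n + 1), le_max_left _ _, fun z hz => ?_⟩
  have hz' : (2 * n + 1 : ℝ) ≤ ‖z‖ := le_trans (le_max_right _ _) hz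
  have hsub : E ∩ {x | x - z ∈ E} ⊆ s n ∪ {x | x - z ∈ s n} := by
    rintro x ⟨hx1, hx2⟩
    by_cases h1 : x ∈ Metric.closedBall (0 : EuclideanSpace ℝ (Fin d)) n
    · by_cases h2 : x - z ∈ Metric.closedBall (0 : EuclideanSpace ℝ (Fin d)) n
      · exfalso
        rw [Metric.mem_closedBall, dist_zero_right] at h1 h2
        have hz2 : ‖z‖ ≤ ‖x‖ + ‖x - z‖ := by
          calc ‖z‖ = ‖x - (x - z)‖ := by rw [_root_.sub_sub_cancel]
            _ ≤ ‖x‖ + ‖x - z‖ := norm_sub_le _ _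
        linarith
      · exact Or.inr ⟨hx2, h2⟩
    · exact Or.inl ⟨hx1, h1⟩
  have htrans : volume {x : EuclideanSpace ℝ (Fin d) | x - z ∈ s n} = volume (s n) := by
    have hseteq : {x : EuclideanSpace ℝ (Fin d) | x - z ∈ s n}
        = (fun x : EuclideanSpace ℝ (Fin d) => x + (-z)) ⁻¹' (s n) := by
      ext x; simp [sub_eq_add_neg]
    rw [hseteq, measure_preimage_add_right]
  calc covFn E z ≤ volume (s n ∪ {x | x - z ∈ s n}) := measure_mono hsub
    _ ≤ volume (s n) + volume {x : EuclideanSpace ℝ (Fin d) | x - z ∈ s n} := measure_union_le _ _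
    _ = volume (s n) + volume (s n) := by rw [htrans]
    _ ≤ η / 2 + η / 2 := add_le_add hn.le hn.le
    _ = η := ENNReal.add_halves η

lemma ell_pos {d : ℕ} (hd : 1 ≤ d) {J : EuclideanSpace ℝ (Fin d) → ℝ}
    (hJmeas : Measurable J) (hJpos : ∀ x, 0 < J x) (s : ℝ) :
    0 < ∫⁻ x in {x : EuclideanSpace ℝ (Fin d) | s < ‖x‖}, ENNReal.ofReal (J x) := by
  have hU : IsOpen {x : EuclideanSpace ℝ (Fin d) | s < ‖x‖} :=
    isOpen_lt continuous_const continuous_norm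
  have hne : {x : EuclideanSpace ℝ (Fin d) | s < ‖x‖}.Nonempty := by
    refine ⟨EuclideanSpace.single ⟨0, hd⟩ (max s 0 + 1), ?_⟩
    simp only [Set.mem_setOf_eq, EuclideanSpace.norm_single]
    rw [Real.norm_eq_abs, abs_of_nonneg (by positivity)]
    have := le_max_left s 0
    linarith
  rw [lintegral_pos_iff_support hJmeas.ennreal_ofReal]
  have hsupp : Function.support (fun x => ENNReal.ofReal (J x)) = Set.univ := by
    ext x
    simp only [Function.mem_support, Set.mem_univ, iff_true]
    simp [ENNReal.ofReal_eq_zero, not_le, hJpos x]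
  rw [hsupp, Measure.restrict_apply_univ]
  exact hU.measure_pos volume hne

lemma annulus_le {d : ℕ} {J : EuclideanSpace ℝ (Fin d) → ℝ} {a b : ℝ} (hab : a ≤ b)
    (hfin : (∫⁻ x in {x : EuclideanSpace ℝ (Fin d) | b < ‖x‖}, ENNReal.ofReal (J x)) ≠ ⊤) :
    ∫⁻ w in {w : EuclideanSpace ℝ (Fin d) | a < ‖w‖ ∧ ‖w‖ ≤ b}, ENNReal.ofReal (J w) ≤
      (∫⁻ x in {x : EuclideanSpace ℝ (Fin d) | a < ‖x‖}, ENNReal.ofReal (J x)) -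
      (∫⁻ x in {x : EuclideanSpace ℝ (Fin d) | b < ‖x‖}, ENNReal.ofReal (J x)) := by
  have hmeasB : MeasurableSet {x : EuclideanSpace ℝ (Fin d) | b < ‖x‖} :=
    (isOpen_lt continuous_const continuous_norm).measurableSet
  have hdisj : Disjoint {w : EuclideanSpace ℝ (Fin d) | a < ‖w‖ ∧ ‖w‖ ≤ b}
      {x : EuclideanSpace ℝ (Fin d) | b < ‖x‖} := by
    rw [Set.disjoint_left]
    rintro x ⟨_, h2⟩ h3
    exact absurd h3 (not_lt.2 h2)
  have hunion : {w : EuclideanSpace ℝ (Fin d) | a < ‖w‖ ∧ ‖w‖ ≤ b} ∪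
      {x : EuclideanSpace ℝ (Fin d) | b < ‖x‖} = {x : EuclideanSpace ℝ (Fin d) | a < ‖x‖} := by
    ext x
    simp only [Set.mem_union, Set.mem_setOf_eq]
    constructor
    · rintro (⟨h1, _⟩ | h)
      · exact h1
      · exact lt_of_le_of_lt hab h
    · intro h
      rcases le_or_gt ‖x‖ b with h2 | h2
      · exact Or.inl ⟨h, h2⟩
      · exact Or.inr h2
  have heq : (∫⁻ x in {x : EuclideanSpace ℝ (Fin d) | a < ‖x‖}, ENNReal.ofReal (J x)) =
      (∫⁻ w in {w : EuclideanSpace ℝ (Fin d) | a < ‖w‖ ∧ ‖w‖ ≤ b}, ENNReal.ofReal (J w)) +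
      (∫⁻ x in {x : EuclideanSpace ℝ (Fin d) | b < ‖x‖}, ENNReal.ofReal (J x)) := by
    rw [← lintegral_union hmeasB hdisj, hunion]
  rw [heq, ENNReal.add_sub_cancel_right hfin]

lemma small_bound {d : ℕ} (hd : 1 ≤ d) {J : EuclideanSpace ℝ (Fin d) → ℝ}
    (hJmeas : Measurable J)
    {ℓ : ℝ → ℝ≥0∞}
    (hℓ : ∀ s, ℓ s = ∫⁻ x in {x : EuclideanSpace ℝ (Fin d) | s < ‖x‖}, ENNReal.ofReal (J x))
    (hℓfin : ∀ s > (0:ℝ), ℓ s < ⊤)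
    {ψ : EuclideanSpace ℝ (Fin d) → ℝ≥0∞}
    {c : ℝ} (hc : 0 ≤ c) (hψ : ∀ w, ψ w ≤ ENNReal.ofReal (c * ‖w‖))
    {b : ℝ} (hb : 0 < b) {δ : ℝ≥0∞} (hδ1 : δ ≤ 2⁻¹)
    (hhalf : ∀ s, 0 < s → s ≤ b → ℓ (2⁻¹ * s) ≤ (1 + δ) * ℓ s) :
    ∫⁻ w in {w : EuclideanSpace ℝ (Fin d) | ‖w‖ ≤ b}, ENNReal.ofReal (J w) * ψ w ≤
      ENNReal.ofReal (c * b) * δ * 4 * ℓ b := by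
  haveI : Nontrivial (EuclideanSpace ℝ (Fin d)) := by
    refine ⟨EuclideanSpace.single ⟨0, hd⟩ (1:ℝ), 0, fun h => ?_⟩
    have := congrArg norm h
    rw [EuclideanSpace.norm_single, norm_zero, Real.norm_eq_abs] at this
    norm_num at this
  -- the dyadic annuli
  set A : ℕ → Set (EuclideanSpace ℝ (Fin d)) :=
    fun k => {w | (2⁻¹:ℝ)^(k+1) * b < ‖w‖ ∧ ‖w‖ ≤ (2⁻¹:ℝ)^k * b} with hA
  have hcover : {w : EuclideanSpace ℝ (Fin d) | ‖w‖ ≤ b} ⊆ {0} ∪ ⋃ k, A k := by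
    intro w hw
    by_cases hw0 : w = 0
    · exact Or.inl hw0
    · have h0 : 0 < ‖w‖ := norm_pos_iff.2 hw0
      have hP : ∃ k, (2⁻¹:ℝ)^(k+1) * b < ‖w‖ := by
        obtain ⟨n, hn⟩ := exists_pow_lt_of_lt_one (div_pos h0 hb) (by norm_num : (2⁻¹:ℝ) < 1)
        refine ⟨n, ?_⟩
        have h1 : (2⁻¹:ℝ)^(n+1) ≤ (2⁻¹:ℝ)^n :=
          pow_le_pow_of_le_one (by norm_num) (by norm_num) (Nat.le_succ n)
        have h2 : (2⁻¹:ℝ)^n * b < ‖w‖ := by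
          rw [← lt_div_iff₀ hb]
          exact hn
        nlinarith
      classical
      set k₀ := Nat.find hP with hk₀
      refine Or.inr (Set.mem_iUnion.2 ⟨k₀, Nat.find_spec hP, ?_⟩)
      rcases Nat.eq_zero_or_pos k₀ with h | h
      · rw [h]; simpa using hw
      · obtain ⟨m, hm⟩ := Nat.exists_eq_add_of_lt h
        have hmin := Nat.find_min hP (show m < k₀ by omega)
        have : k₀ = m + 1 := by omega
        rw [this]
        exact not_lt.1 hmin

  have hmeasA : ∀ k, MeasurableSet (A k) := fun k => by
    have h1 : MeasurableSet {w : EuclideanSpace ℝ (Fin d) | (2⁻¹:ℝ)^(k+1) * b < ‖w‖} :=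
      (isOpen_lt continuous_const continuous_norm).measurableSet
    have h2 : MeasurableSet {w : EuclideanSpace ℝ (Fin d) | ‖w‖ ≤ (2⁻¹:ℝ)^k * b} :=
      (isClosed_le continuous_norm continuous_const).measurableSet
    exact h1.inter h2
  have hsk_pos : ∀ k : ℕ, 0 < (2⁻¹:ℝ)^k * b := fun k => by positivity
  have hsk_le : ∀ k : ℕ, (2⁻¹:ℝ)^k * b ≤ b := fun k => by
    have h1 : (2⁻¹:ℝ)^k ≤ 1 := pow_le_one₀ (by norm_num) (by norm_num)
    nlinarith
  have hℓb_fin : ∀ k : ℕ, ℓ ((2⁻¹:ℝ)^k * b) ≠ ⊤ := fun k => (hℓfin _ (hsk_pos k)).ne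
  have hiter : ∀ k : ℕ, ℓ ((2⁻¹:ℝ)^k * b) ≤ (1+δ)^k * ℓ b := by
    intro k
    induction k with
    | zero => simp
    | succ k ih =>
      have heq : (2⁻¹:ℝ)^(k+1) * b = 2⁻¹ * ((2⁻¹:ℝ)^k * b) := by ring
      rw [heq]
      calc ℓ (2⁻¹ * ((2⁻¹:ℝ)^k * b)) ≤ (1+δ) * ℓ ((2⁻¹:ℝ)^k * b) :=
            hhalf _ (hsk_pos k) (hsk_le k)
        _ ≤ (1+δ) * ((1+δ)^k * ℓ b) := mul_le_mul_right ih _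
        _ = (1+δ)^(k+1) * ℓ b := by ring
  have hdiff : ∀ k : ℕ, ℓ ((2⁻¹:ℝ)^(k+1) * b) - ℓ ((2⁻¹:ℝ)^k * b) ≤ δ * ((1+δ)^k * ℓ b) := by
    intro k
    have heq : (2⁻¹:ℝ)^(k+1) * b = 2⁻¹ * ((2⁻¹:ℝ)^k * b) := by ring
    have h1 : ℓ ((2⁻¹:ℝ)^(k+1) * b) ≤ δ * ℓ ((2⁻¹:ℝ)^k * b) + ℓ ((2⁻¹:ℝ)^k * b) := by
      rw [heq]
      calc ℓ (2⁻¹ * ((2⁻¹:ℝ)^k * b)) ≤ (1+δ) * ℓ ((2⁻¹:ℝ)^k * b) :=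
            hhalf _ (hsk_pos k) (hsk_le k)
        _ = δ * ℓ ((2⁻¹:ℝ)^k * b) + ℓ ((2⁻¹:ℝ)^k * b) := by ring
    calc ℓ ((2⁻¹:ℝ)^(k+1) * b) - ℓ ((2⁻¹:ℝ)^k * b) ≤ δ * ℓ ((2⁻¹:ℝ)^k * b) :=
          tsub_le_iff_right.2 h1
      _ ≤ δ * ((1+δ)^k * ℓ b) := mul_le_mul_right (hiter k) δ
  have hterm : ∀ k : ℕ, (∫⁻ w in A k, ENNReal.ofReal (J w) * ψ w) ≤
      (ENNReal.ofReal (c*b) * δ * ℓ b) * ((1+δ) * 2⁻¹)^k := by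
    intro k
    have hψk : ∀ w ∈ A k, ENNReal.ofReal (J w) * ψ w ≤
        ENNReal.ofReal (J w) * (ENNReal.ofReal (c*b) * (2⁻¹:ℝ≥0∞)^k) := by
      intro w hw
      refine mul_le_mul_right ?_ _
      calc ψ w ≤ ENNReal.ofReal (c * ‖w‖) := hψ w
        _ ≤ ENNReal.ofReal ((c*b) * (2⁻¹:ℝ)^k) := by
            refine ENNReal.ofReal_le_ofReal ?_
            have h2 := hw.2
            calc c * ‖w‖ ≤ c * ((2⁻¹:ℝ)^k * b) := mul_le_mul_of_nonneg_left h2 hc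
              _ = (c*b) * (2⁻¹:ℝ)^k := by ring
        _ = ENNReal.ofReal (c*b) * ENNReal.ofReal ((2⁻¹:ℝ)^k) :=
            ENNReal.ofReal_mul (by positivity)
        _ = ENNReal.ofReal (c*b) * (2⁻¹:ℝ≥0∞)^k := by
            rw [ENNReal.ofReal_pow (by norm_num), ENNReal.ofReal_inv_of_pos (by norm_num),
              ENNReal.ofReal_ofNat]
    calc (∫⁻ w in A k, ENNReal.ofReal (J w) * ψ w)
        ≤ ∫⁻ w in A k, ENNReal.ofReal (J w) * (ENNReal.ofReal (c*b) * (2⁻¹:ℝ≥0∞)^k) :=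
          setLIntegral_mono (hJmeas.ennreal_ofReal.mul measurable_const) hψk
      _ = (∫⁻ w in A k, ENNReal.ofReal (J w)) * (ENNReal.ofReal (c*b) * (2⁻¹:ℝ≥0∞)^k) :=
          lintegral_mul_const' _ _ (by
            exact ENNReal.mul_ne_top ENNReal.ofReal_ne_top
              (pow_ne_top (by simp : (2⁻¹:ℝ≥0∞) ≠ ⊤)))
      _ ≤ (ℓ ((2⁻¹:ℝ)^(k+1) * b) - ℓ ((2⁻¹:ℝ)^k * b)) * (ENNReal.ofReal (c*b) * (2⁻¹:ℝ≥0∞)^k) := by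
          refine mul_le_mul_left ?_ _
          rw [hℓ, hℓ]
          refine annulus_le ?_ (by rw [← hℓ]; exact hℓb_fin k)
          have h1 : (2⁻¹:ℝ)^(k+1) ≤ (2⁻¹:ℝ)^k :=
            pow_le_pow_of_le_one (by norm_num) (by norm_num) (Nat.le_succ k)
          nlinarith
      _ ≤ (δ * ((1+δ)^k * ℓ b)) * (ENNReal.ofReal (c*b) * (2⁻¹:ℝ≥0∞)^k) :=
          mul_le_mul_left (hdiff k) _
      _ = (ENNReal.ofReal (c*b) * δ * ℓ b) * ((1+δ) * 2⁻¹)^k := by rw [mul_pow]; ring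
  have hgeom : (1 - (1+δ) * 2⁻¹ : ℝ≥0∞)⁻¹ ≤ 4 := by
    have h34 : (3:ℝ≥0∞) * 4⁻¹ + 4⁻¹ = 1 := by
      have : ((3:ℝ≥0∞) * 4⁻¹ + 4⁻¹) = 4 * 4⁻¹ := by ring
      rw [this, ENNReal.mul_inv_cancel (by norm_num) (by norm_num)]
    have h1 : (1+δ) * 2⁻¹ ≤ 3 * 4⁻¹ := by
      have h2 : (1+δ) ≤ 3 * 2⁻¹ := by
        calc 1+δ ≤ 1 + 2⁻¹ := add_le_add_right hδ1 1
          _ = 3 * 2⁻¹ := by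
            have h22 : (2:ℝ≥0∞) * 2⁻¹ = 1 := ENNReal.mul_inv_cancel (by norm_num) (by norm_num)
            rw [show (3:ℝ≥0∞) = 2 + 1 by norm_num, add_mul, one_mul, h22]
      calc (1+δ) * 2⁻¹ ≤ (3 * 2⁻¹) * 2⁻¹ := mul_le_mul_left h2 _
        _ = 3 * (2⁻¹ * 2⁻¹) := by ring
        _ = 3 * 4⁻¹ := by
          congr 1
          rw [← ENNReal.mul_inv (Or.inl (by norm_num)) (Or.inl (by norm_num))]
          norm_num
    have h2 : (4⁻¹:ℝ≥0∞) ≤ 1 - (1+δ) * 2⁻¹ := by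
      have h3 : (4⁻¹:ℝ≥0∞) = 1 - 3 * 4⁻¹ := by
        refine ENNReal.eq_sub_of_add_eq
          (ENNReal.mul_ne_top (by norm_num) (ENNReal.inv_ne_top.2 (by norm_num))) ?_
        rw [add_comm]
        exact h34
      rw [h3]
      exact tsub_le_tsub_left h1 1
    calc (1 - (1+δ) * 2⁻¹ : ℝ≥0∞)⁻¹ ≤ ((4:ℝ≥0∞)⁻¹)⁻¹ := ENNReal.inv_le_inv' h2
      _ = 4 := inv_inv _
  calc ∫⁻ w in {w : EuclideanSpace ℝ (Fin d) | ‖w‖ ≤ b}, ENNReal.ofReal (J w) * ψ w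
      ≤ ∫⁻ w in ({0} ∪ ⋃ k, A k : Set (EuclideanSpace ℝ (Fin d))),
          ENNReal.ofReal (J w) * ψ w := lintegral_mono_set hcover
    _ ≤ (∫⁻ w in ({0} : Set (EuclideanSpace ℝ (Fin d))), ENNReal.ofReal (J w) * ψ w)
        + ∫⁻ w in ⋃ k, A k, ENNReal.ofReal (J w) * ψ w := lintegral_union_le _ _ _
    _ ≤ 0 + ∑' k, ∫⁻ w in A k, ENNReal.ofReal (J w) * ψ w := by
        refine add_le_add ?_ (lintegral_iUnion_le _ _)
        rw [setLIntegral_measure_zero _ _ (measure_singleton 0)]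
    _ ≤ 0 + ∑' k, (ENNReal.ofReal (c*b) * δ * ℓ b) * ((1+δ) * 2⁻¹)^k :=
        add_le_add le_rfl (ENNReal.tsum_le_tsum hterm)
    _ ≤ ENNReal.ofReal (c * b) * δ * 4 * ℓ b := by
        rw [zero_add, ENNReal.tsum_mul_left, ENNReal.tsum_geometric]
        calc (ENNReal.ofReal (c*b) * δ * ℓ b) * (1 - (1+δ) * 2⁻¹)⁻¹
            ≤ (ENNReal.ofReal (c*b) * δ * ℓ b) * 4 := mul_le_mul_right hgeom _
          _ = ENNReal.ofReal (c * b) * δ * 4 * ℓ b := by ring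

lemma jper_scaled {d : ℕ} {J : EuclideanSpace ℝ (Fin d) → ℝ} (hJmeas : Measurable J)
    {E : Set (EuclideanSpace ℝ (Fin d))} (hE : MeasurableSet E) (hEvol : volume E < ⊤)
    (hg : Measurable (covFn E)) {ε : ℝ} (hε : 0 < ε) :
    JPer (fun x => ε ^ d * J (ε • x)) E
      = ∫⁻ w, ENNReal.ofReal (J w) * (volume E - covFn E (ε⁻¹ • w)) := by
  have hεd : (0:ℝ) < ε ^ d := by positivity
  have hFmeas : Measurable fun x : EuclideanSpace ℝ (Fin d) => ε ^ d * J (ε • x) :=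
    measurable_const.mul (hJmeas.comp (measurable_const_smul ε))
  rw [jper_eq _ hFmeas E hE hEvol]
  set f : EuclideanSpace ℝ (Fin d) → ℝ≥0∞ :=
    fun w => ENNReal.ofReal (J w) * (volume E - covFn E (ε⁻¹ • w)) with hf
  have hfmeas : Measurable f :=
    hJmeas.ennreal_ofReal.mul (measurable_const.sub (hg.comp (measurable_const_smul ε⁻¹)))
  have hpt : ∀ z, ENNReal.ofReal (ε ^ d * J (ε • z)) * (volume E - covFn E z)
      = ENNReal.ofReal (ε ^ d) * f (ε • z) := by
    intro z
    rw [hf]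
    simp only []
    rw [inv_smul_smul₀ hε.ne', ENNReal.ofReal_mul hεd.le, mul_assoc]
  simp_rw [hpt]
  rw [lintegral_const_mul' _ _ ENNReal.ofReal_ne_top, lintegral_scale hfmeas hε.ne', ← mul_assoc,
    ← ENNReal.ofReal_mul hεd.le, abs_of_nonneg (by positivity : (0:ℝ) ≤ (ε ^ d)⁻¹),
    mul_inv_cancel₀ hεd.ne', ENNReal.ofReal_one, one_mul]


/-- For a positive kernel `J` with slowly varying tail
`ℓ(s) = ∫_{|x|>s} J(x) dx` at zero, the rescaled kernels `J_ε(x) = ε^d J(εx)`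
satisfy `ℓ(ε)⁻¹ Per_{J_ε}(E) → |E|` for every Borel set `E` of finite Lebesgue
measure with Lipschitz covariance function. -/
theorem statement15 {d : ℕ} (hd : 1 ≤ d)
    (J : EuclideanSpace ℝ (Fin d) → ℝ)
    (hJmeas : Measurable J) (hJpos : ∀ x, 0 < J x)
    (hint : ∀ ε > (0 : ℝ),
      Integrable fun x : EuclideanSpace ℝ (Fin d) =>
        min 1 ‖x‖ * (ε ^ d * J (ε • x)))
    (ℓ : ℝ → ℝ≥0∞)
    (hℓ : ∀ s, ℓ s = ∫⁻ x in {x : EuclideanSpace ℝ (Fin d) | s < ‖x‖},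
      ENNReal.ofReal (J x))
    (hℓfin : ∀ s > (0 : ℝ), ℓ s < ⊤)
    (hslow : ∀ c > (0 : ℝ),
      Tendsto (fun s => ℓ (c * s) / ℓ s) (𝓝[>] (0 : ℝ)) (𝓝 1))
    (E : Set (EuclideanSpace ℝ (Fin d)))
    (hE : MeasurableSet E) (hEvol : volume E < ⊤)
    (hLip : ∃ L : ℝ≥0, LipschitzWith L fun y => (covFn E y).toReal) :
    Tendsto (fun ε : ℝ => (ℓ ε)⁻¹ * JPer (fun x => ε ^ d * J (ε • x)) E)
      (𝓝[>] (0 : ℝ)) (𝓝 (volume E)) := by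
  obtain ⟨L, hL⟩ := hLip
  have hgcont : Continuous (covFn E) := covFn_cont hEvol hL
  have hgmeas : Measurable (covFn E) := hgcont.measurable
  have hℓpos : ∀ s : ℝ, 0 < ℓ s := fun s => by
    rw [hℓ]; exact ell_pos hd hJmeas hJpos s
  rw [ENNReal.tendsto_nhds hEvol.ne]
  intro η hη
  set V := volume E with hV
  -- auxiliary small quantities
  set η' : ℝ≥0∞ := min η 1 with hη'def
  have hη'pos : 0 < η' := lt_min hη zero_lt_one
  have hη'top : η' ≠ ⊤ := ((min_le_right η 1).trans_lt (by norm_num)).ne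
  set η₂ : ℝ≥0∞ := η' / 2 with hη₂def
  have hη₂pos : 0 < η₂ := ENNReal.div_pos hη'pos.ne' (by norm_num)
  obtain ⟨R, hR1, hRvan⟩ := covFn_vanish hE hEvol hη₂pos
  have hRpos : (0:ℝ) < R := lt_of_lt_of_le one_pos hR1
  set η₃ : ℝ≥0∞ := min 2⁻¹ (η₂ / (V + 1)) with hη₃def
  have hη₃pos : 0 < η₃ :=
    lt_min (by norm_num) (ENNReal.div_pos hη₂pos.ne' (ENNReal.add_ne_top.2 ⟨hEvol.ne, by norm_num⟩))
  have hη₃le1 : η₃ ≤ 1 := (min_le_left _ _).trans (by norm_num)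
  have hVη₃ : V * η₃ ≤ η₂ := by
    calc V * η₃ ≤ (V + 1) * (η₂ / (V + 1)) :=
          mul_le_mul' le_self_add (min_le_right _ _)
      _ ≤ η₂ := ENNReal.mul_div_le
  set C : ℝ≥0∞ := ENNReal.ofReal ((L:ℝ) * R) with hCdef
  set δ : ℝ≥0∞ := min 2⁻¹ (η₂ / (C * 4 + 1)) with hδdef
  have hδpos : 0 < δ := by
    refine lt_min (by norm_num) (ENNReal.div_pos hη₂pos.ne' ?_)
    exact ENNReal.add_ne_top.2 ⟨ENNReal.mul_ne_top ENNReal.ofReal_ne_top (by norm_num),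
      by norm_num⟩
  have hδ1 : δ ≤ 2⁻¹ := min_le_left _ _
  have hδC : C * δ * 4 ≤ η₂ := by
    calc C * δ * 4 ≤ C * (η₂ / (C * 4 + 1)) * 4 :=
          mul_le_mul_left (mul_le_mul_right (min_le_right _ _) C) 4
      _ = (C * 4) * (η₂ / (C * 4 + 1)) := by ring
      _ ≤ (C * 4 + 1) * (η₂ / (C * 4 + 1)) := mul_le_mul_left le_self_add _
      _ ≤ η₂ := ENNReal.mul_div_le
  -- eventual slow-variation bounds
  have h1δ : (1:ℝ≥0∞) < 1 + δ := ENNReal.lt_add_right one_ne_top hδpos.ne'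
  have hhalf_ev := (hslow 2⁻¹ (by norm_num)).eventually_lt_const h1δ
  obtain ⟨u, hu0, huP⟩ := mem_nhdsGT_iff_exists_Ioc_subset.1 hhalf_ev
  have hu_pos : (0:ℝ) < u := hu0
  have hu : ∀ s : ℝ, 0 < s → s ≤ u → ℓ (2⁻¹ * s) ≤ (1 + δ) * ℓ s := by
    intro s hs0 hsu
    have hlt : ℓ (2⁻¹ * s) / ℓ s < 1 + δ := huP ⟨hs0, hsu⟩
    exact (ENNReal.div_le_iff (hℓpos s).ne' (hℓfin s hs0).ne).1 hlt.le
  have hslowR := (hslow R hRpos).eventually_const_lt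
    (ENNReal.sub_lt_self one_ne_top one_ne_zero hη₃pos.ne')
  filter_upwards [self_mem_nhdsWithin,
    Ioo_mem_nhdsGT_of_mem ⟨le_refl (0:ℝ), div_pos hu_pos hRpos⟩, hslowR]
    with ε hεmem hεu hεR
  have hε : (0:ℝ) < ε := hεmem
  have hbu : R * ε ≤ u := by
    have := hεu.2
    rw [lt_div_iff₀ hRpos] at this
    linarith [this]
  have hbpos : (0:ℝ) < R * ε := mul_pos hRpos hε
  have hℓε0 : ℓ ε ≠ 0 := (hℓpos ε).ne'
  have hℓεtop : ℓ ε ≠ ⊤ := (hℓfin ε hε).ne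
  have hℓRε : (1 - η₃) * ℓ ε ≤ ℓ (R * ε) := by
    have := hεR.le
    exact (ENNReal.le_div_iff_mul_le (Or.inl hℓε0) (Or.inl hℓεtop)).1 this
  have hℓmono : ℓ (R * ε) ≤ ℓ ε := by
    rw [hℓ, hℓ]
    refine lintegral_mono_set ?_
    intro x hx
    exact lt_of_le_of_lt (by nlinarith : ε ≤ R * ε) hx
  -- the rescaled perimeter identity
  have hIdent := jper_scaled hJmeas hE hEvol hgmeas hε
  set ψ : EuclideanSpace ℝ (Fin d) → ℝ≥0∞ :=
    fun w => V - covFn E (ε⁻¹ • w) with hψdef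
  set S : Set (EuclideanSpace ℝ (Fin d)) := {w | R * ε < ‖w‖} with hSdef
  have hSmeas : MeasurableSet S := (isOpen_lt continuous_const continuous_norm).measurableSet
  have hImeas : Measurable fun w => ENNReal.ofReal (J w) * ψ w :=
    hJmeas.ennreal_ofReal.mul
      (measurable_const.sub (hgmeas.comp (measurable_const_smul ε⁻¹)))
  have hnorm_smul : ∀ w : EuclideanSpace ℝ (Fin d), ‖ε⁻¹ • w‖ = ε⁻¹ * ‖w‖ := by
    intro w
    rw [norm_smul, Real.norm_eq_abs, abs_of_pos (by positivity)]
  -- upper bound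
  have hup1 : (∫⁻ w in S, ENNReal.ofReal (J w) * ψ w) ≤ ℓ (R * ε) * V := by
    calc (∫⁻ w in S, ENNReal.ofReal (J w) * ψ w)
        ≤ ∫⁻ w in S, ENNReal.ofReal (J w) * V :=
          setLIntegral_mono (hJmeas.ennreal_ofReal.mul measurable_const)
            (fun w _ => mul_le_mul_right tsub_le_self _)
      _ = (∫⁻ w in S, ENNReal.ofReal (J w)) * V :=
          lintegral_mul_const' _ _ hEvol.ne
      _ = ℓ (R * ε) * V := by rw [hℓ]
  have hup2 : (∫⁻ w in Sᶜ, ENNReal.ofReal (J w) * ψ w) ≤ C * δ * 4 * ℓ (R * ε) := by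
    have hScompl : Sᶜ = {w : EuclideanSpace ℝ (Fin d) | ‖w‖ ≤ R * ε} := by
      ext w; simp [hSdef, not_lt]
    have hψb : ∀ w, ψ w ≤ ENNReal.ofReal (((L:ℝ) * ε⁻¹) * ‖w‖) := by
      intro w
      calc ψ w ≤ ENNReal.ofReal ((L:ℝ) * ‖ε⁻¹ • w‖) := psi_le hEvol hL _
        _ = ENNReal.ofReal (((L:ℝ) * ε⁻¹) * ‖w‖) := by rw [hnorm_smul w, mul_assoc]
    have hhalfb : ∀ s : ℝ, 0 < s → s ≤ R * ε → ℓ (2⁻¹ * s) ≤ (1 + δ) * ℓ s :=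
      fun s hs0 hsb => hu s hs0 (hsb.trans hbu)
    have hsb := small_bound hd hJmeas hℓ hℓfin
      (by positivity : (0:ℝ) ≤ (L:ℝ) * ε⁻¹) hψb hbpos hδ1 hhalfb
    rw [hScompl]
    refine hsb.trans ?_
    have hceq : ((L:ℝ) * ε⁻¹) * (R * ε) = (L:ℝ) * R := by field_simp
    rw [hceq]
  have hup : (∫⁻ w, ENNReal.ofReal (J w) * ψ w) ≤ (V + η₂) * ℓ ε := by
    rw [← lintegral_add_compl (fun w => ENNReal.ofReal (J w) * ψ w) hSmeas]
    calc (∫⁻ w in S, ENNReal.ofReal (J w) * ψ w) +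
          ∫⁻ w in Sᶜ, ENNReal.ofReal (J w) * ψ w
        ≤ ℓ (R * ε) * V + C * δ * 4 * ℓ (R * ε) := add_le_add hup1 hup2
      _ ≤ ℓ ε * V + η₂ * ℓ ε := by
          refine add_le_add (mul_le_mul_left hℓmono V) ?_
          calc C * δ * 4 * ℓ (R * ε) ≤ η₂ * ℓ (R * ε) := mul_le_mul_left hδC _
            _ ≤ η₂ * ℓ ε := mul_le_mul_right hℓmono η₂
      _ = (V + η₂) * ℓ ε := by ring
  -- lower bound
  have hlow : (V - η₂) * (1 - η₃) * ℓ ε ≤ ∫⁻ w, ENNReal.ofReal (J w) * ψ w := by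
    have hψlow : ∀ w ∈ S, (V - η₂) ≤ ψ w := by
      intro w hw
      refine tsub_le_tsub_left (hRvan _ ?_) V
      rw [hnorm_smul w]
      have hw' : R * ε < ‖w‖ := hw
      have hinv : (0:ℝ) < ε⁻¹ := by positivity
      calc R = R * ε * ε⁻¹ := by field_simp
        _ ≤ ‖w‖ * ε⁻¹ := by nlinarith
        _ = ε⁻¹ * ‖w‖ := by ring
    calc (V - η₂) * (1 - η₃) * ℓ ε = (V - η₂) * ((1 - η₃) * ℓ ε) := by ring
      _ ≤ (V - η₂) * ℓ (R * ε) := mul_le_mul_right hℓRε _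
      _ = (∫⁻ w in S, ENNReal.ofReal (J w)) * (V - η₂) := by rw [hℓ]; ring
      _ = ∫⁻ w in S, ENNReal.ofReal (J w) * (V - η₂) :=
          (lintegral_mul_const' _ _ (by
            exact (lt_of_le_of_lt tsub_le_self hEvol).ne)).symm
      _ ≤ ∫⁻ w in S, ENNReal.ofReal (J w) * ψ w :=
          setLIntegral_mono hImeas (fun w hw => mul_le_mul_right (hψlow w hw) _)
      _ ≤ ∫⁻ w, ENNReal.ofReal (J w) * ψ w := by
          calc (∫⁻ w in S, ENNReal.ofReal (J w) * ψ w)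
              ≤ (∫⁻ w in S, ENNReal.ofReal (J w) * ψ w) +
                ∫⁻ w in Sᶜ, ENNReal.ofReal (J w) * ψ w := le_self_add
            _ = ∫⁻ w, ENNReal.ofReal (J w) * ψ w :=
                lintegral_add_compl (fun w => ENNReal.ofReal (J w) * ψ w) hSmeas
  -- conclude
  have hVη : V - η ≤ (V - η₂) * (1 - η₃) := by
    have hstep1 : V - η ≤ V - η' := tsub_le_tsub_left (min_le_left η 1) V
    have hstep2 : V - η' = (V - η₂) - η₂ := by
      rw [tsub_tsub, ENNReal.add_halves]
    have hstep3 : (V - η₂) - η₂ ≤ (V - η₂) - (V - η₂) * η₃ := by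
      refine tsub_le_tsub_left ?_ (V - η₂)
      calc (V - η₂) * η₃ ≤ V * η₃ := mul_le_mul_left tsub_le_self η₃
        _ ≤ η₂ := hVη₃
    have hstep4 : (V - η₂) - (V - η₂) * η₃ ≤ (V - η₂) * (1 - η₃) := by
      rw [tsub_le_iff_right]
      refine le_of_eq ?_
      calc V - η₂ = (V - η₂) * ((1 - η₃) + η₃) := by
            rw [tsub_add_cancel_of_le hη₃le1, mul_one]
        _ = (V - η₂) * (1 - η₃) + (V - η₂) * η₃ := by ring
    calc V - η ≤ V - η' := hstep1
      _ = (V - η₂) - η₂ := hstep2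
      _ ≤ (V - η₂) - (V - η₂) * η₃ := hstep3
      _ ≤ (V - η₂) * (1 - η₃) := hstep4
  constructor
  · rw [hIdent]
    calc V - η ≤ (V - η₂) * (1 - η₃) := hVη
      _ = (V - η₂) * (1 - η₃) * (ℓ ε * (ℓ ε)⁻¹) := by
          rw [ENNReal.mul_inv_cancel hℓε0 hℓεtop, mul_one]
      _ = (ℓ ε)⁻¹ * ((V - η₂) * (1 - η₃) * ℓ ε) := by ring
      _ ≤ (ℓ ε)⁻¹ * ∫⁻ w, ENNReal.ofReal (J w) * ψ w := mul_le_mul_right hlow _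
  · rw [hIdent]
    calc (ℓ ε)⁻¹ * ∫⁻ w, ENNReal.ofReal (J w) * ψ w
        ≤ (ℓ ε)⁻¹ * ((V + η₂) * ℓ ε) := mul_le_mul_right hup _
      _ = (V + η₂) * ((ℓ ε)⁻¹ * ℓ ε) := by ring
      _ = V + η₂ := by rw [ENNReal.inv_mul_cancel hℓε0 hℓεtop, mul_one]
      _ ≤ V + η := by
          refine add_le_add_right ?_ V
          calc η₂ ≤ η' := ENNReal.half_le_self
            _ ≤ η := min_le_left η 1
end

section
/- Let d ≥ 1 and let J : ℝ^d → (0,∞) be a Borel function with J ∈ L^1(ℝ^d). For ε > 0 set J_ε(x) = ε^d J(εx). Then for every Borel set E ⊂ ℝ^d of finite Lebesgue measure, lim_{ε→0⁺} Per_{J_ε}(E) = ‖J‖_{L^1} |E|. -/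
open MeasureTheory Filter Topology ENNReal

/-- The measure of `E ∩ (E + v)` tends to `0` as `‖v‖ → ∞`, for `E` of finite measure. -/
lemma inter_translate_tendsto_zero {d : ℕ} (E : Set (EuclideanSpace ℝ (Fin d)))
    (hE : MeasurableSet E) (hEvol : volume E < ⊤) :
    Tendsto (fun v : EuclideanSpace ℝ (Fin d) => volume (E ∩ (fun x => x - v) ⁻¹' E))
      (Bornology.cobounded _) (𝓝 0) := by
  rw [ENNReal.tendsto_nhds_zero]
  intro δ hδ
  -- choose a large ball capturing most of E
  have hiInter : ⋂ n : ℕ, (E \ Metric.closedBall (0 : EuclideanSpace ℝ (Fin d)) n) = ∅ := by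
    refine Set.eq_empty_iff_forall_notMem.mpr fun x hx => ?_
    obtain ⟨n, hn⟩ := exists_nat_ge ‖x‖
    have hmem := Set.mem_iInter.mp hx n
    exact hmem.2 (by simpa [dist_zero_right] using hn)
  have h1 : Tendsto (fun n : ℕ => volume (E \ Metric.closedBall (0 : EuclideanSpace ℝ (Fin d)) n))
      atTop (𝓝 0) := by
    have := tendsto_measure_iInter_atTop (μ := volume)
      (s := fun n : ℕ => E \ Metric.closedBall (0 : EuclideanSpace ℝ (Fin d)) n)
      (fun n => (hE.diff measurableSet_closedBall).nullMeasurableSet)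
      (fun m n hmn => Set.diff_subset_diff_right (Metric.closedBall_subset_closedBall
        (by exact_mod_cast hmn)))
      ⟨0, (lt_of_le_of_lt (measure_mono Set.diff_subset) hEvol).ne⟩
    rwa [hiInter, measure_empty] at this
  obtain ⟨n, hn⟩ := (h1.eventually_lt_const (ENNReal.half_pos hδ.ne')).exists
  have hcob : ∀ᶠ v : EuclideanSpace ℝ (Fin d) in Bornology.cobounded _, (2 * n : ℝ) < ‖v‖ :=
    tendsto_norm_cobounded_atTop.eventually (eventually_gt_atTop _)
  filter_upwards [hcob] with v hv
  set B := Metric.closedBall (0 : EuclideanSpace ℝ (Fin d)) n with hB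
  have hsub : E ∩ (fun x => x - v) ⁻¹' E ⊆ (E \ B) ∪ ((fun x => x - v) ⁻¹' (E \ B)) := by
    intro x hx
    by_cases hx1 : x ∈ B
    · by_cases hx2 : x - v ∈ B
      · exfalso
        have h1 : ‖x‖ ≤ (n : ℝ) := by simpa [hB, dist_zero_right] using hx1
        have h2 : ‖x - v‖ ≤ (n : ℝ) := by simpa [hB, dist_zero_right] using hx2
        have hxv : x - (x - v) = v := by abel
        have : ‖v‖ ≤ 2 * n := by
          calc ‖v‖ = ‖x - (x - v)‖ := by rw [hxv]
          _ ≤ ‖x‖ + ‖x - v‖ := norm_sub_le _ _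
          _ ≤ 2 * n := by linarith
        linarith
      · exact Or.inr ⟨hx.2, hx2⟩
    · exact Or.inl ⟨hx.1, hx1⟩
  have hmp : volume ((fun x : EuclideanSpace ℝ (Fin d) => x - v) ⁻¹' (E \ B)) = volume (E \ B) :=
    (measurePreserving_sub_right volume v).measure_preimage
      (hE.diff measurableSet_closedBall).nullMeasurableSet
  calc volume (E ∩ (fun x => x - v) ⁻¹' E)
      ≤ volume ((E \ B) ∪ ((fun x => x - v) ⁻¹' (E \ B))) := measure_mono hsub
    _ ≤ volume (E \ B) + volume ((fun x : EuclideanSpace ℝ (Fin d) => x - v) ⁻¹' (E \ B)) :=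
        measure_union_le _ _
    _ = volume (E \ B) + volume (E \ B) := by rw [hmp]
    _ ≤ δ / 2 + δ / 2 := add_le_add hn.le hn.le
    _ = δ := ENNReal.add_halves δ

/-- For an integrable positive kernel `J` and its rescalings `J_ε(x) = ε^d J(εx)`,
`Per_{J_ε}(E) → ‖J‖_{L¹} |E|` as `ε ↓ 0`, for every Borel set `E` of finite Lebesgue
measure. -/
theorem statement16 {d : ℕ} (hd : 1 ≤ d)
    (J : EuclideanSpace ℝ (Fin d) → ℝ)
    (hJmeas : Measurable J) (hJpos : ∀ x, 0 < J x) (hJL1 : Integrable J)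
    (E : Set (EuclideanSpace ℝ (Fin d)))
    (hE : MeasurableSet E) (hEvol : volume E < ⊤) :
    Tendsto (fun ε : ℝ => JPer (fun x => ε ^ d * J (ε • x)) E)
      (𝓝[>] (0 : ℝ)) (𝓝 (ENNReal.ofReal (∫ x, J x) * volume E)) := by
  haveI : Nonempty (Fin d) := Fin.pos_iff_nonempty.mp hd
  set ind : EuclideanSpace ℝ (Fin d) → ℝ≥0∞ := Set.indicator Eᶜ 1 with hind_def
  have hind_meas : Measurable ind := measurable_one.indicator hE.compl
  set gv : EuclideanSpace ℝ (Fin d) → ℝ≥0∞ :=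
    fun v => ∫⁻ x in E, ind (x - v) ∂volume with hgv_def
  -- change of variables in the inner integral
  have key : ∀ ε : ℝ, 0 < ε → ∀ x : EuclideanSpace ℝ (Fin d),
      ∫⁻ y in Eᶜ, ENNReal.ofReal (ε ^ d * J (ε • (x - y))) ∂volume
        = ∫⁻ z, ind (x - ε⁻¹ • z) * ENNReal.ofReal (J z) ∂volume := by
    intro ε hε x
    have hεd : (0:ℝ) < ε ^ d := pow_pos hε d
    have hsubx : MeasurePreserving (fun y : EuclideanSpace ℝ (Fin d) => x - y) volume volume := by
      have h := (measurePreserving_add_left (volume : Measure (EuclideanSpace ℝ (Fin d))) x).comp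
        (Measure.measurePreserving_neg volume)
      simpa [Function.comp_def, sub_eq_add_neg] using h
    have hφmeas : Measurable (fun y : EuclideanSpace ℝ (Fin d) => ε • (x - y)) :=
      (measurable_const.sub measurable_id).const_smul ε
    have hφ : Measure.map (fun y : EuclideanSpace ℝ (Fin d) => ε • (x - y)) volume
        = ENNReal.ofReal ((ε ^ d)⁻¹) • volume := by
      rw [show (fun y : EuclideanSpace ℝ (Fin d) => ε • (x - y))
          = (fun y : EuclideanSpace ℝ (Fin d) => ε • y) ∘ (fun y => x - y) from rfl,
        ← Measure.map_map (measurable_const_smul ε) hsubx.measurable, hsubx.map_eq,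
        Measure.map_addHaar_smul volume hε.ne', finrank_euclideanSpace_fin,
        abs_of_pos (by positivity)]
    have hH : Measurable fun z : EuclideanSpace ℝ (Fin d) =>
        ind (x - ε⁻¹ • z) * ENNReal.ofReal (J z) :=
      (hind_meas.comp (measurable_const.sub (measurable_id.const_smul ε⁻¹))).mul
        hJmeas.ennreal_ofReal
    have hG : Measurable fun y : EuclideanSpace ℝ (Fin d) =>
        ind y * ENNReal.ofReal (J (ε • (x - y))) :=
      hind_meas.mul (hJmeas.ennreal_ofReal.comp hφmeas)
    calc ∫⁻ y in Eᶜ, ENNReal.ofReal (ε ^ d * J (ε • (x - y))) ∂volume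
        = ∫⁻ y, Set.indicator Eᶜ (fun y => ENNReal.ofReal (ε ^ d * J (ε • (x - y)))) y ∂volume := by
          rw [lintegral_indicator hE.compl]
      _ = ∫⁻ y, ENNReal.ofReal (ε ^ d)
            * (ind y * ENNReal.ofReal (J (ε • (x - y)))) ∂volume := by
          congr 1; funext y
          by_cases hy : y ∈ Eᶜ
          · simp [hind_def, hy, ENNReal.ofReal_mul hεd.le]
          · simp [hind_def, hy]
      _ = ENNReal.ofReal (ε ^ d)
            * ∫⁻ y, ind y * ENNReal.ofReal (J (ε • (x - y))) ∂volume :=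
          lintegral_const_mul _ hG
      _ = ENNReal.ofReal (ε ^ d)
            * ∫⁻ y, (fun z => ind (x - ε⁻¹ • z) * ENNReal.ofReal (J z)) (ε • (x - y)) ∂volume := by
          congr 1; apply lintegral_congr; intro y
          have h3 : x - ε⁻¹ • (ε • (x - y)) = y := by
            rw [inv_smul_smul₀ hε.ne']; abel
          simp only [h3]
      _ = ENNReal.ofReal (ε ^ d) * ∫⁻ z, ind (x - ε⁻¹ • z)
            * ENNReal.ofReal (J z) ∂(Measure.map (fun y => ε • (x - y)) volume) := by
          rw [lintegral_map hH hφmeas]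
      _ = ∫⁻ z, ind (x - ε⁻¹ • z) * ENNReal.ofReal (J z) ∂volume := by
          rw [hφ, lintegral_smul_measure, smul_eq_mul, ← mul_assoc, ← ENNReal.ofReal_mul hεd.le,
            mul_inv_cancel₀ hεd.ne', ENNReal.ofReal_one, one_mul]
  -- Fubini: JPer in terms of gv
  have swap : ∀ ε : ℝ, 0 < ε →
      JPer (fun x => ε ^ d * J (ε • x)) E
        = ∫⁻ z, gv (ε⁻¹ • z) * ENNReal.ofReal (J z) ∂volume := by
    intro ε hε
    have h0 : JPer (fun x => ε ^ d * J (ε • x)) E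
        = ∫⁻ x in E, ∫⁻ y in Eᶜ, ENNReal.ofReal (ε ^ d * J (ε • (x - y))) ∂volume ∂volume := rfl
    rw [h0, lintegral_congr (fun x => key ε hε x)]
    have hf : AEMeasurable (Function.uncurry fun (x z : EuclideanSpace ℝ (Fin d)) =>
        ind (x - ε⁻¹ • z) * ENNReal.ofReal (J z))
        ((volume.restrict E).prod volume) :=
      ((hind_meas.comp (measurable_fst.sub (measurable_snd.const_smul ε⁻¹))).mul
        (hJmeas.ennreal_ofReal.comp measurable_snd)).aemeasurable
    rw [lintegral_lintegral_swap hf]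
    apply lintegral_congr; intro z
    rw [hgv_def]
    exact lintegral_mul_const _ (hind_meas.comp (measurable_id.sub_const (ε⁻¹ • z)))
  -- identification of gv with a measure
  have hgv_eq : ∀ v, gv v = volume (E \ (fun x => x - v) ⁻¹' E) := by
    intro v
    have hS : MeasurableSet ((fun x : EuclideanSpace ℝ (Fin d) => x - v) ⁻¹' Eᶜ) :=
      (measurable_id.sub_const v) hE.compl
    have h1 : ∀ x : EuclideanSpace ℝ (Fin d), ind (x - v)
        = Set.indicator ((fun x : EuclideanSpace ℝ (Fin d) => x - v) ⁻¹' Eᶜ)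
            (1 : EuclideanSpace ℝ (Fin d) → ℝ≥0∞) x := by
      intro x
      by_cases hx : x - v ∈ E <;>
        simp [hind_def, Set.indicator_apply, Set.mem_preimage, Set.mem_compl_iff, hx]
    rw [hgv_def]
    simp only [h1]
    rw [lintegral_indicator_one hS, Measure.restrict_apply hS]
    congr 1
    ext x
    simp only [Set.mem_inter_iff, Set.mem_preimage, Set.mem_compl_iff, Set.mem_diff]
    tauto
  have hgv_le : ∀ v, gv v ≤ volume E := by
    intro v; rw [hgv_eq]; exact measure_mono Set.diff_subset
  have hgv_meas : Measurable gv := by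
    rw [hgv_def]
    exact Measurable.lintegral_prod_right
      (f := fun (v x : EuclideanSpace ℝ (Fin d)) => ind (x - v))
      (hind_meas.comp (measurable_snd.sub measurable_fst))
  -- gv tends to volume E at infinity
  have hgvT : Tendsto gv (Bornology.cobounded (EuclideanSpace ℝ (Fin d))) (𝓝 (volume E)) := by
    have hA := inter_translate_tendsto_zero E hE hEvol
    have low : Tendsto (fun v : EuclideanSpace ℝ (Fin d) =>
        volume E - volume (E ∩ (fun x => x - v) ⁻¹' E))
        (Bornology.cobounded _) (𝓝 (volume E)) := by
      simpa using ENNReal.Tendsto.sub tendsto_const_nhds hA (Or.inl hEvol.ne)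
    refine tendsto_of_tendsto_of_tendsto_of_le_of_le low tendsto_const_nhds ?_ hgv_le
    intro v
    rw [hgv_eq]
    refine tsub_le_iff_left.2 ?_
    exact (measure_inter_add_diff E ((measurable_id.sub_const v) hE)).symm.le
  -- the dominated convergence argument
  have hJlint : ∫⁻ z, ENNReal.ofReal (J z) ∂volume = ENNReal.ofReal (∫ x, J x) :=
    (ofReal_integral_eq_lintegral_ofReal hJL1 (ae_of_all _ fun x => (hJpos x).le)).symm
  have hmain : Tendsto (fun ε : ℝ => ∫⁻ z, gv (ε⁻¹ • z) * ENNReal.ofReal (J z) ∂volume)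
      (𝓝[>] (0 : ℝ)) (𝓝 (∫⁻ z, volume E * ENNReal.ofReal (J z) ∂volume)) := by
    apply tendsto_lintegral_filter_of_dominated_convergence
      (fun z => volume E * ENNReal.ofReal (J z))
    · filter_upwards with ε
      exact (hgv_meas.comp (measurable_id.const_smul ε⁻¹)).mul hJmeas.ennreal_ofReal
    · filter_upwards with ε
      filter_upwards with z
      exact mul_le_mul_left (hgv_le _) _
    · rw [lintegral_const_mul _ hJmeas.ennreal_ofReal, hJlint]
      exact ENNReal.mul_ne_top hEvol.ne ENNReal.ofReal_ne_top
    · have h0 : ∀ᵐ z : EuclideanSpace ℝ (Fin d) ∂volume, z ≠ 0 := by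
        refine (ae_iff).2 ?_
        simp only [not_not]
        have h : {z : EuclideanSpace ℝ (Fin d) | z = 0} = {0} := by ext z; simp
        rw [h, measure_singleton]
      filter_upwards [h0] with z hz
      have h1 : Tendsto (fun ε : ℝ => ε⁻¹ • z) (𝓝[>] (0 : ℝ))
          (Bornology.cobounded (EuclideanSpace ℝ (Fin d))) := by
        rw [← tendsto_norm_atTop_iff_cobounded]
        have h2 : Tendsto (fun ε : ℝ => ε⁻¹ * ‖z‖) (𝓝[>] (0 : ℝ)) atTop :=
          tendsto_inv_nhdsGT_zero.atTop_mul_const (norm_pos_iff.mpr hz)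
        apply h2.congr'
        filter_upwards [self_mem_nhdsWithin] with ε (hε : 0 < ε)
        rw [norm_smul, Real.norm_eq_abs, abs_of_pos (inv_pos.2 hε)]
      exact ENNReal.Tendsto.mul_const (hgvT.comp h1) (Or.inr ENNReal.ofReal_ne_top)
  have hlim : ∫⁻ z, volume E * ENNReal.ofReal (J z) ∂volume
      = ENNReal.ofReal (∫ x, J x) * volume E := by
    rw [lintegral_const_mul _ hJmeas.ennreal_ofReal, hJlint, mul_comm]
  rw [← hlim]
  apply hmain.congr'
  filter_upwards [self_mem_nhdsWithin] with ε (hε : 0 < ε)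
  exact (swap ε hε).symm
end

section
/- Let d ≥ 1 and let (λ_ε)_{ε>0} be a family of Borel probability measures on ℝ^d with λ_ε({0}) = 0 for every ε > 0, such that for every R > 0, λ_ε({x : |x| > R}) → 0 as ε → 0⁺. Let ε_j → 0⁺ be a sequence such that the spherical projections μ_{ε_j} of λ_{ε_j} converge weakly to a probability measure μ on S^{d−1}. Then for every R > 0 and every twice continuously differentiable f : ℝ^d → ℝ, lim_{j→∞} ∫_{B_R} ∫_{B_R} |f(x+y) − f(x)| / |y| λ_{ε_j}(dy) dx = ∫_{S^{d−1}} ∫_{B_R} |∇f(x) · θ| dx μ(dθ), where B_R is the closed Euclidean ball of radius R centred at the origin. -/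
open MeasureTheory Filter Topology ENNReal

set_option maxHeartbeats 1000000 in
/-- Localized convergence lemma: if `(λ_ε)` is a family of probability measures with
no atom at `0` whose mass concentrates at the origin, and `ε_j → 0⁺` is a sequence
whose spherical projections converge weakly to a probability measure `μ` on the unit
sphere (realized as a measure on `ℝ^d` carried by the sphere), then for every `R > 0`
and every `C²` function `f : ℝ^d → ℝ`,
`∫_{B_R} ∫_{B_R} |f(x+y) − f(x)|/|y| λ_{ε_j}(dy) dx →
  ∫_{S^{d−1}} ∫_{B_R} |∇f(x)·θ| dx μ(dθ)`. -/
theorem statement19 {d : ℕ} (hd : 1 ≤ d)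
    (lam : ℝ → Measure (EuclideanSpace ℝ (Fin d)))
    (hprob : ∀ ε > (0 : ℝ), IsProbabilityMeasure (lam ε))
    (h0 : ∀ ε > (0 : ℝ), lam ε {0} = 0)
    (htight : ∀ R > (0 : ℝ),
      Tendsto (fun ε => lam ε {x | R < ‖x‖}) (𝓝[>] (0 : ℝ)) (𝓝 0))
    (εj : ℕ → ℝ) (hεjpos : ∀ j, 0 < εj j) (hεj : Tendsto εj atTop (𝓝 0))
    (μ : Measure (EuclideanSpace ℝ (Fin d))) (hμ : IsProbabilityMeasure μ)
    (hμsph : μ (Metric.sphere (0 : EuclideanSpace ℝ (Fin d)) 1)ᶜ = 0)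
    (hweak : ∀ F : BoundedContinuousFunction (EuclideanSpace ℝ (Fin d)) ℝ,
      Tendsto (fun j => ∫ y, F (‖y‖⁻¹ • y) ∂(lam (εj j))) atTop
        (𝓝 (∫ θ, F θ ∂μ)))
    (R : ℝ) (hR : 0 < R)
    (f : EuclideanSpace ℝ (Fin d) → ℝ) (hf : ContDiff ℝ 2 f) :
    Tendsto
      (fun j => ∫⁻ x in Metric.closedBall (0 : EuclideanSpace ℝ (Fin d)) R,
        ∫⁻ y in Metric.closedBall (0 : EuclideanSpace ℝ (Fin d)) R,
          ENNReal.ofReal (|f (x + y) - f x| / ‖y‖) ∂(lam (εj j)))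
      atTop
      (𝓝 (∫⁻ θ, (∫⁻ x in Metric.closedBall (0 : EuclideanSpace ℝ (Fin d)) R,
        ENNReal.ofReal (|fderiv ℝ f x θ|)) ∂μ)) := by
  classical
  set B : Set (EuclideanSpace ℝ (Fin d)) := Metric.closedBall 0 R with hBdef
  have hBmeas : MeasurableSet B := measurableSet_closedBall
  have hBvol : volume B < ∞ := measure_closedBall_lt_top
  set volR : ℝ := (volume B).toReal with hvolR
  have hvolR0 : 0 ≤ volR := ENNReal.toReal_nonneg
  haveI : Fact (volume B < ∞) := ⟨hBvol⟩
  -- derivative facts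
  have hfc : Continuous f := hf.continuous
  have hfd : Differentiable ℝ f := hf.differentiable (by norm_num)
  have hf'c : Continuous (fderiv ℝ f) := hf.continuous_fderiv (by norm_num)
  have hf'cd : ContDiff ℝ 1 (fderiv ℝ f) := hf.fderiv_right (by norm_num)
  have hf'd : Differentiable ℝ (fderiv ℝ f) := hf'cd.differentiable one_ne_zero
  -- bounds on the ball of radius 2R
  obtain ⟨M, hM0, hM⟩ : ∃ M, 0 ≤ M ∧
      ∀ z ∈ Metric.closedBall (0 : (EuclideanSpace ℝ (Fin d))) (2 * R), ‖fderiv ℝ f z‖ ≤ M := by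
    obtain ⟨C, hC⟩ := (isCompact_closedBall (0 : (EuclideanSpace ℝ (Fin d))) (2 * R)).exists_bound_of_continuousOn
      hf'c.continuousOn
    exact ⟨max C 0, le_max_right _ _, fun z hz => (hC z hz).trans (le_max_left _ _)⟩
  obtain ⟨L, hL0, hL⟩ : ∃ L, 0 ≤ L ∧
      ∀ z ∈ Metric.closedBall (0 : (EuclideanSpace ℝ (Fin d))) (2 * R), ‖fderiv ℝ (fderiv ℝ f) z‖ ≤ L := by
    obtain ⟨C, hC⟩ := (isCompact_closedBall (0 : (EuclideanSpace ℝ (Fin d))) (2 * R)).exists_bound_of_continuousOn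
      (hf'cd.continuous_fderiv one_ne_zero).continuousOn
    exact ⟨max C 0, le_max_right _ _, fun z hz => (hC z hz).trans (le_max_left _ _)⟩
  have hBsub : B ⊆ Metric.closedBall (0 : (EuclideanSpace ℝ (Fin d))) (2 * R) := by
    apply Metric.closedBall_subset_closedBall; linarith
  -- Lipschitz bound for f on the ball of radius 2R
  have hlipf : ∀ a ∈ Metric.closedBall (0 : (EuclideanSpace ℝ (Fin d))) (2 * R),
      ∀ b ∈ Metric.closedBall (0 : (EuclideanSpace ℝ (Fin d))) (2 * R), ‖f b - f a‖ ≤ M * ‖b - a‖ := by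
    intro a ha b hb
    exact (convex_closedBall (0 : (EuclideanSpace ℝ (Fin d))) (2 * R)).norm_image_sub_le_of_norm_fderiv_le
      (fun z _ => hfd z) (fun z hz => hM z hz) ha hb
  -- Lipschitz bound for fderiv f on the ball of radius 2R
  have hlip' : ∀ a ∈ Metric.closedBall (0 : (EuclideanSpace ℝ (Fin d))) (2 * R),
      ∀ b ∈ Metric.closedBall (0 : (EuclideanSpace ℝ (Fin d))) (2 * R),
      ‖fderiv ℝ f b - fderiv ℝ f a‖ ≤ L * ‖b - a‖ := by
    intro a ha b hb
    exact (convex_closedBall (0 : (EuclideanSpace ℝ (Fin d))) (2 * R)).norm_image_sub_le_of_norm_fderiv_le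
      (fun z _ => hf'd z) (fun z hz => hL z hz) ha hb
  -- Taylor-type bound
  have htay : ∀ x ∈ B, ∀ y : (EuclideanSpace ℝ (Fin d)), ‖y‖ ≤ R →
      |f (x + y) - f x - fderiv ℝ f x y| ≤ L * ‖y‖ * ‖y‖ := by
    intro x hx y hy
    have hxB2 : Metric.closedBall x ‖y‖ ⊆ Metric.closedBall (0 : (EuclideanSpace ℝ (Fin d))) (2 * R) := by
      intro z hz
      rw [Metric.mem_closedBall] at hz ⊢
      have hx' : dist x 0 ≤ R := by rwa [hBdef, Metric.mem_closedBall] at hx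
      calc dist z 0 ≤ dist z x + dist x 0 := dist_triangle _ _ _
        _ ≤ ‖y‖ + R := add_le_add hz hx'
        _ ≤ 2 * R := by linarith
    have hxy : x + y ∈ Metric.closedBall x ‖y‖ := by
      rw [Metric.mem_closedBall, dist_self_add_left]
    have := (convex_closedBall x ‖y‖).norm_image_sub_le_of_norm_fderiv_le'
      (fun z _ => hfd z)
      (fun z hz => by
        calc ‖fderiv ℝ f z - fderiv ℝ f x‖ ≤ L * ‖z - x‖ :=
              hlip' x (hxB2 (Metric.mem_closedBall_self (norm_nonneg y))) z (hxB2 hz)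
          _ ≤ L * ‖y‖ := by
              apply mul_le_mul_of_nonneg_left _ hL0
              rwa [← dist_eq_norm, ← Metric.mem_closedBall])
      (Metric.mem_closedBall_self (norm_nonneg y)) hxy
    simpa [add_sub_cancel_left, Real.norm_eq_abs] using this
  -- pointwise bound for the difference quotient
  have hgb : ∀ x ∈ B, ∀ y ∈ B, |f (x + y) - f x| / ‖y‖ ≤ M := by
    intro x hx y hy
    rcases eq_or_ne y 0 with rfl | hy0
    · simp [hM0]
    · have hny : 0 < ‖y‖ := norm_pos_iff.mpr hy0
      rw [div_le_iff₀ hny]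
      have hxy2 : x + y ∈ Metric.closedBall (0 : (EuclideanSpace ℝ (Fin d))) (2 * R) := by
        rw [Metric.mem_closedBall, dist_zero_right]
        have hx' : ‖x‖ ≤ R := by rwa [hBdef, Metric.mem_closedBall, dist_zero_right] at hx
        have hy' : ‖y‖ ≤ R := by rwa [hBdef, Metric.mem_closedBall, dist_zero_right] at hy
        calc ‖x + y‖ ≤ ‖x‖ + ‖y‖ := norm_add_le _ _
          _ ≤ 2 * R := by linarith
      have := hlipf x (hBsub hx) (x + y) hxy2
      simpa [add_sub_cancel_left, Real.norm_eq_abs] using this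
  -- key pointwise comparison with the directional derivative
  have hkey : ∀ x ∈ B, ∀ y : (EuclideanSpace ℝ (Fin d)), y ≠ 0 → ‖y‖ ≤ R →
      abs (|f (x + y) - f x| / ‖y‖ - |fderiv ℝ f x (‖y‖⁻¹ • y)|) ≤ L * ‖y‖ := by
    intro x hx y hy0 hyR
    have hny : 0 < ‖y‖ := norm_pos_iff.mpr hy0
    have h1 : fderiv ℝ f x (‖y‖⁻¹ • y) = ‖y‖⁻¹ * fderiv ℝ f x y := by
      rw [ContinuousLinearMap.map_smul, smul_eq_mul]
    have h2 : |fderiv ℝ f x (‖y‖⁻¹ • y)| = |fderiv ℝ f x y| / ‖y‖ := by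
      rw [h1, abs_mul, abs_inv, abs_norm, inv_mul_eq_div]
    rw [h2]
    calc abs (|f (x + y) - f x| / ‖y‖ - |fderiv ℝ f x y| / ‖y‖)
        = abs (|f (x + y) - f x| - |fderiv ℝ f x y|) / ‖y‖ := by
          rw [← sub_div, abs_div, abs_norm]
      _ ≤ |f (x + y) - f x - fderiv ℝ f x y| / ‖y‖ :=
          div_le_div_of_nonneg_right (abs_abs_sub_abs_le_abs_sub _ _) hny.le
      _ ≤ L * ‖y‖ * ‖y‖ / ‖y‖ :=
          div_le_div_of_nonneg_right (htay x hx y hyR) hny.le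
      _ = L * ‖y‖ := by field_simp
  -- measurability of the integrand
  have hgm : Measurable (fun p : (EuclideanSpace ℝ (Fin d)) × (EuclideanSpace ℝ (Fin d)) => |f (p.1 + p.2) - f p.1| / ‖p.2‖) := by
    apply Measurable.div
    · exact (((hfc.comp (continuous_fst.add continuous_snd)).sub
        (hfc.comp continuous_fst)).abs).measurable
    · exact continuous_snd.norm.measurable
  have hg0 : ∀ x y : (EuclideanSpace ℝ (Fin d)), 0 ≤ |f (x + y) - f x| / ‖y‖ :=
    fun x y => div_nonneg (abs_nonneg _) (norm_nonneg _)
  -- G : integral over x of the difference quotient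
  set G : (EuclideanSpace ℝ (Fin d)) → ℝ := fun y => ∫ x in B, |f (x + y) - f x| / ‖y‖ with hGdef
  have hGsm : StronglyMeasurable G :=
    hgm.stronglyMeasurable.integral_prod_left'
  have hGnn : ∀ y, 0 ≤ G y := fun y => integral_nonneg (fun x => hg0 x y)
  have hGb : ∀ y ∈ B, |G y| ≤ M * volR := by
    intro y hy
    rw [← Real.norm_eq_abs]
    exact norm_setIntegral_le_of_norm_le_const hBvol
      (fun x hx => by rw [Real.norm_eq_abs, abs_of_nonneg (hg0 x y)]; exact hgb x hx y hy)
  -- Hs : integral over x of the directional derivative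
  have hDfc : ∀ v : (EuclideanSpace ℝ (Fin d)), Continuous fun x => |fderiv ℝ f x v| := by
    intro v
    exact (hf'c.clm_apply continuous_const).abs
  have hDf_int : ∀ v : (EuclideanSpace ℝ (Fin d)), IntegrableOn (fun x => |fderiv ℝ f x v|) B volume := by
    intro v
    exact (hDfc v).continuousOn.integrableOn_compact (isCompact_closedBall _ _)
  set Hs : (EuclideanSpace ℝ (Fin d)) → ℝ := fun v => ∫ x in B, |fderiv ℝ f x v| with hHsdef
  have hHs0 : ∀ v, 0 ≤ Hs v := fun v => integral_nonneg (fun x => abs_nonneg _)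
  have hHsle : ∀ v : (EuclideanSpace ℝ (Fin d)), Hs v ≤ M * ‖v‖ * volR := by
    intro v
    calc Hs v ≤ |Hs v| := le_abs_self _
      _ ≤ M * ‖v‖ * volR := by
          rw [← Real.norm_eq_abs]
          refine norm_setIntegral_le_of_norm_le_const hBvol (fun x hx => ?_)
          rw [Real.norm_eq_abs, abs_abs]
          calc |fderiv ℝ f x v| ≤ ‖fderiv ℝ f x‖ * ‖v‖ := (fderiv ℝ f x).le_opNorm v
            _ ≤ M * ‖v‖ := by
                apply mul_le_mul_of_nonneg_right (hM x (hBsub hx)) (norm_nonneg v)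
  have hHlip : ∀ v w : (EuclideanSpace ℝ (Fin d)), |Hs v - Hs w| ≤ M * volR * ‖v - w‖ := by
    intro v w
    have h1 : Hs v - Hs w = ∫ x in B, (|fderiv ℝ f x v| - |fderiv ℝ f x w|) :=
      (integral_sub (hDf_int v) (hDf_int w)).symm
    rw [h1, ← Real.norm_eq_abs]
    calc ‖∫ x in B, (|fderiv ℝ f x v| - |fderiv ℝ f x w|)‖
        ≤ (M * ‖v - w‖) * volR := by
          refine norm_setIntegral_le_of_norm_le_const hBvol (fun x hx => ?_)
          rw [Real.norm_eq_abs]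
          calc abs (|fderiv ℝ f x v| - |fderiv ℝ f x w|) ≤ |fderiv ℝ f x v - fderiv ℝ f x w| :=
                abs_abs_sub_abs_le_abs_sub _ _
            _ = |fderiv ℝ f x (v - w)| := by rw [map_sub]
            _ ≤ ‖fderiv ℝ f x‖ * ‖v - w‖ := (fderiv ℝ f x).le_opNorm _
            _ ≤ M * ‖v - w‖ :=
                mul_le_mul_of_nonneg_right (hM x (hBsub hx)) (norm_nonneg _)
      _ = M * volR * ‖v - w‖ := by ring
  have hHcont : Continuous Hs := by
    have : LipschitzWith (Real.toNNReal (M * volR)) Hs := by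
      apply LipschitzWith.of_dist_le_mul
      intro v w
      rw [Real.dist_eq, dist_eq_norm, Real.coe_toNNReal _ (mul_nonneg hM0 hvolR0)]
      exact hHlip v w
    exact this.continuous
  -- the bounded continuous function F
  set MB : ℝ := M * volR with hMBdef
  have hMB0 : 0 ≤ MB := mul_nonneg hM0 hvolR0
  set F : BoundedContinuousFunction (EuclideanSpace ℝ (Fin d)) ℝ :=
    ⟨⟨fun v => min (Hs v) MB, hHcont.min continuous_const⟩, MB, fun v w => by
      rw [Real.dist_eq, abs_sub_le_iff]
      constructor
      · have h1 : min (Hs v) MB ≤ MB := min_le_right _ _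
        have h2 : 0 ≤ min (Hs w) MB := le_min (hHs0 w) hMB0
        linarith
      · have h1 : min (Hs w) MB ≤ MB := min_le_right _ _
        have h2 : 0 ≤ min (Hs v) MB := le_min (hHs0 v) hMB0
        linarith⟩ with hFdef
  have hFval : ∀ v : (EuclideanSpace ℝ (Fin d)), F v = min (Hs v) MB := fun v => rfl
  have hF0 : ∀ v : (EuclideanSpace ℝ (Fin d)), 0 ≤ F v := fun v => le_min (hHs0 v) hMB0
  have hFle : ∀ v : (EuclideanSpace ℝ (Fin d)), F v ≤ MB := fun v => min_le_right _ _
  have hFeq : ∀ v : (EuclideanSpace ℝ (Fin d)), ‖v‖ = 1 → F v = Hs v := by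
    intro v hv
    rw [hFval]
    apply min_eq_left
    calc Hs v ≤ M * ‖v‖ * volR := hHsle v
      _ = MB := by rw [hv]; ring
  -- μ is carried by the unit sphere
  have hμae : ∀ᵐ θ ∂μ, ‖θ‖ = 1 := by
    rw [ae_iff]
    convert hμsph using 2
    ext θ
    simp [Metric.mem_sphere, dist_zero_right]
  -- RHS identification
  have hFμint : Integrable (fun θ => F θ) μ := by
    refine Integrable.mono' (integrable_const MB) F.continuous.aestronglyMeasurable ?_
    exact Eventually.of_forall fun θ => by
      rw [Real.norm_eq_abs, abs_of_nonneg (hF0 θ)]; exact hFle θ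
  have hRHS : ∫⁻ θ, (∫⁻ x in B, ENNReal.ofReal (|fderiv ℝ f x θ|)) ∂μ
      = ENNReal.ofReal (∫ θ, F θ ∂μ) := by
    have h1 : ∀ θ : (EuclideanSpace ℝ (Fin d)), (∫⁻ x in B, ENNReal.ofReal (|fderiv ℝ f x θ|)) = ENNReal.ofReal (Hs θ) :=
      fun θ => (ofReal_integral_eq_lintegral_ofReal (hDf_int θ)
        (Eventually.of_forall fun x => abs_nonneg _)).symm
    calc ∫⁻ θ, (∫⁻ x in B, ENNReal.ofReal (|fderiv ℝ f x θ|)) ∂μ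
        = ∫⁻ θ, ENNReal.ofReal (Hs θ) ∂μ := by simp_rw [h1]
      _ = ∫⁻ θ, ENNReal.ofReal (F θ) ∂μ := by
          refine lintegral_congr_ae (hμae.mono fun θ hθ => ?_)
          exact congrArg ENNReal.ofReal (hFeq θ hθ).symm
      _ = ENNReal.ofReal (∫ θ, F θ ∂μ) :=
          (ofReal_integral_eq_lintegral_ofReal hFμint (Eventually.of_forall hF0)).symm
  -- LHS identification
  set a : ℕ → ℝ := fun j => ∫ y in B, G y ∂(lam (εj j)) with hadef
  have hLHS : ∀ j, (∫⁻ x in B, ∫⁻ y in B,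
      ENNReal.ofReal (|f (x + y) - f x| / ‖y‖) ∂(lam (εj j))) = ENNReal.ofReal (a j) := by
    intro j
    haveI : IsProbabilityMeasure (lam (εj j)) := hprob _ (hεjpos j)
    set ν : Measure (EuclideanSpace ℝ (Fin d)) := lam (εj j) with hνdef
    have hνB1 : (ν B).toReal ≤ 1 := by
      apply ENNReal.toReal_le_of_le_ofReal one_pos.le
      simpa using prob_le_one (μ := ν) (s := B)
    have hinner : ∀ x ∈ B, (∫⁻ y in B, ENNReal.ofReal (|f (x + y) - f x| / ‖y‖) ∂ν)
        = ENNReal.ofReal (∫ y in B, |f (x + y) - f x| / ‖y‖ ∂ν) := by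
      intro x hx
      refine (ofReal_integral_eq_lintegral_ofReal ?_
        (Eventually.of_forall fun y => hg0 x y)).symm
      refine Integrable.mono' (integrable_const M) ?_ ?_
      · exact (hgm.comp (measurable_const.prodMk measurable_id)).aestronglyMeasurable
      · filter_upwards [ae_restrict_mem hBmeas] with y hy
        rw [Real.norm_eq_abs, abs_of_nonneg (hg0 x y)]
        exact hgb x hx y hy
    have step1 : (∫⁻ x in B, ∫⁻ y in B,
        ENNReal.ofReal (|f (x + y) - f x| / ‖y‖) ∂ν)
        = ∫⁻ x in B, ENNReal.ofReal (∫ y in B, |f (x + y) - f x| / ‖y‖ ∂ν) := by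
      refine setLIntegral_congr_fun hBmeas ?_
      intro x hx
      exact hinner x hx
    have hGxsm : StronglyMeasurable (fun x => ∫ y in B, |f (x + y) - f x| / ‖y‖ ∂ν) :=
      hgm.stronglyMeasurable.integral_prod_right'
    have hGxnn : ∀ x, 0 ≤ ∫ y in B, |f (x + y) - f x| / ‖y‖ ∂ν :=
      fun x => integral_nonneg (fun y => hg0 x y)
    have hGxint : IntegrableOn (fun x => ∫ y in B, |f (x + y) - f x| / ‖y‖ ∂ν) B volume := by
      refine Integrable.mono' (integrable_const M) hGxsm.aestronglyMeasurable.restrict ?_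
      filter_upwards [ae_restrict_mem hBmeas] with x hx
      rw [Real.norm_eq_abs, abs_of_nonneg (hGxnn x)]
      calc (∫ y in B, |f (x + y) - f x| / ‖y‖ ∂ν) ≤ |∫ y in B, |f (x + y) - f x| / ‖y‖ ∂ν| :=
            le_abs_self _
        _ ≤ M * (ν B).toReal := by
            rw [← Real.norm_eq_abs]
            refine norm_setIntegral_le_of_norm_le_const ?_ (fun y hy => ?_)
            · exact (measure_lt_top ν B)
            · rw [Real.norm_eq_abs, abs_of_nonneg (hg0 x y)]; exact hgb x hx y hy
        _ ≤ M * 1 := mul_le_mul_of_nonneg_left hνB1 hM0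
        _ = M := mul_one M
    have step2 : (∫⁻ x in B, ENNReal.ofReal (∫ y in B, |f (x + y) - f x| / ‖y‖ ∂ν))
        = ENNReal.ofReal (∫ x in B, ∫ y in B, |f (x + y) - f x| / ‖y‖ ∂ν) :=
      (ofReal_integral_eq_lintegral_ofReal hGxint
        (Eventually.of_forall fun x => hGxnn x)).symm
    have hprodInt : Integrable (Function.uncurry fun x y => |f (x + y) - f x| / ‖y‖)
        ((volume.restrict B).prod (ν.restrict B)) := by
      refine Integrable.mono' (integrable_const M) ?_ ?_
      · exact hgm.aestronglyMeasurable
      · rw [Measure.prod_restrict]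
        filter_upwards [ae_restrict_mem (hBmeas.prod hBmeas)] with p hp
        rw [Set.mem_prod] at hp
        rw [Function.uncurry, Real.norm_eq_abs, abs_of_nonneg (hg0 p.1 p.2)]
        exact hgb p.1 hp.1 p.2 hp.2
    have step3 : (∫ x in B, ∫ y in B, |f (x + y) - f x| / ‖y‖ ∂ν) = a j :=
      integral_integral_swap hprodInt
    rw [step1, step2, step3]
  -- the weak convergence term
  set c : ℕ → ℝ := fun j => ∫ y, F (‖y‖⁻¹ • y) ∂(lam (εj j)) with hcdef
  have hc : Tendsto c atTop (𝓝 (∫ θ, F θ ∂μ)) := hweak F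
  -- integrability facts along the sequence
  have hpm : Measurable (fun y : (EuclideanSpace ℝ (Fin d)) => F (‖y‖⁻¹ • y)) :=
    F.continuous.measurable.comp (measurable_norm.inv.smul measurable_id)
  have hFp_int : ∀ j, Integrable (fun y => F (‖y‖⁻¹ • y)) (lam (εj j)) := by
    intro j
    haveI : IsProbabilityMeasure (lam (εj j)) := hprob _ (hεjpos j)
    refine Integrable.mono' (integrable_const MB) hpm.aestronglyMeasurable ?_
    exact Eventually.of_forall fun y => by
      rw [Real.norm_eq_abs, abs_of_nonneg (hF0 _)]; exact hFle _
  have hiGb : ∀ y : (EuclideanSpace ℝ (Fin d)), |Set.indicator B G y| ≤ MB := by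
    intro y
    by_cases hy : y ∈ B
    · rw [Set.indicator_of_mem hy]; exact hGb y hy
    · rw [Set.indicator_of_notMem hy]; simpa using hMB0
  have hiG_int : ∀ j, Integrable (Set.indicator B G) (lam (εj j)) := by
    intro j
    haveI : IsProbabilityMeasure (lam (εj j)) := hprob _ (hεjpos j)
    refine Integrable.mono' (integrable_const MB)
      (hGsm.indicator hBmeas).aestronglyMeasurable ?_
    exact Eventually.of_forall fun y => by rw [Real.norm_eq_abs]; exact hiGb y
  -- pointwise bound on the discrepancy
  have hqb : ∀ δ : ℝ, 0 < δ → δ ≤ R → ∀ y : (EuclideanSpace ℝ (Fin d)), y ≠ 0 →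
      |Set.indicator B G y - F (‖y‖⁻¹ • y)| ≤
        L * volR * δ + (2 * MB) * Set.indicator {y : (EuclideanSpace ℝ (Fin d)) | δ < ‖y‖} (fun _ => 1) y := by
    intro δ hδ0 hδR y hy0
    have hny : 0 < ‖y‖ := norm_pos_iff.mpr hy0
    have hpnorm : ‖(‖y‖⁻¹ • y)‖ = 1 := norm_smul_inv_norm hy0
    by_cases hyδ : ‖y‖ ≤ δ
    · have hyB : y ∈ B := by
        rw [hBdef, Metric.mem_closedBall, dist_zero_right]; linarith
      have hyS : y ∉ {y : (EuclideanSpace ℝ (Fin d)) | δ < ‖y‖} := by simp; linarith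
      rw [Set.indicator_of_notMem hyS, Set.indicator_of_mem hyB, mul_zero, add_zero]
      rw [hFeq _ hpnorm]
      -- |G y - Hs (‖y‖⁻¹ • y)| ≤ L * volR * ‖y‖ ≤ L * volR * δ
      have hyR : ‖y‖ ≤ R := le_trans hyδ hδR
      have hgy_int : IntegrableOn (fun x => |f (x + y) - f x| / ‖y‖) B volume := by
        have : Continuous fun x : (EuclideanSpace ℝ (Fin d)) => |f (x + y) - f x| / ‖y‖ := by
          apply Continuous.div_const
          exact ((hfc.comp (continuous_id.add continuous_const)).sub hfc).abs
        exact this.continuousOn.integrableOn_compact (isCompact_closedBall _ _)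
      have h1 : G y - Hs (‖y‖⁻¹ • y)
          = ∫ x in B, (|f (x + y) - f x| / ‖y‖ - |fderiv ℝ f x (‖y‖⁻¹ • y)|) :=
        (integral_sub hgy_int (hDf_int _)).symm
      calc |G y - Hs (‖y‖⁻¹ • y)|
          ≤ (L * ‖y‖) * volR := by
            rw [h1, ← Real.norm_eq_abs]
            refine norm_setIntegral_le_of_norm_le_const hBvol (fun x hx => ?_)
            rw [Real.norm_eq_abs]
            exact hkey x hx y hy0 hyR
        _ ≤ L * volR * δ := by
            rw [show (L * ‖y‖) * volR = L * volR * ‖y‖ by ring]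
            exact mul_le_mul_of_nonneg_left hyδ (mul_nonneg hL0 hvolR0)
    · push_neg at hyδ
      have hyS : y ∈ {y : (EuclideanSpace ℝ (Fin d)) | δ < ‖y‖} := hyδ
      rw [Set.indicator_of_mem hyS, mul_one]
      have h1 : |Set.indicator B G y - F (‖y‖⁻¹ • y)| ≤ MB + MB := by
        calc |Set.indicator B G y - F (‖y‖⁻¹ • y)|
            ≤ |Set.indicator B G y| + |F (‖y‖⁻¹ • y)| := abs_sub _ _
          _ ≤ MB + MB := by
              apply add_le_add (hiGb y)
              rw [abs_of_nonneg (hF0 _)]; exact hFle _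
      have h2 : 0 ≤ L * volR * δ := mul_nonneg (mul_nonneg hL0 hvolR0) hδ0.le
      linarith
  -- a.e. nonvanishing
  have hane : ∀ j, ∀ᵐ y ∂(lam (εj j)), y ≠ 0 := by
    intro j
    rw [ae_iff]
    convert h0 _ (hεjpos j) using 2
    ext y; simp
  -- tightness along the sequence
  have hεj' : Tendsto εj atTop (𝓝[>] (0 : ℝ)) := by
    apply tendsto_nhdsWithin_of_tendsto_nhds_of_eventually_within _ hεj
    exact Eventually.of_forall fun j => hεjpos j
  have htt : ∀ δ : ℝ, 0 < δ →
      Tendsto (fun j => ((lam (εj j)) {x | δ < ‖x‖}).toReal) atTop (𝓝 0) := by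
    intro δ hδ
    have h1 : Tendsto (fun j => (lam (εj j)) {x | δ < ‖x‖}) atTop (𝓝 0) :=
      (htight δ hδ).comp hεj'
    have h2 := (ENNReal.tendsto_toReal (a := (0 : ℝ≥0∞)) (by simp)).comp h1
    simpa [Function.comp_def] using h2
  -- the key estimate
  have hest : ∀ δ : ℝ, 0 < δ → δ ≤ R → ∀ j,
      |a j - c j| ≤ L * volR * δ + (2 * MB) * ((lam (εj j)) {x | δ < ‖x‖}).toReal := by
    intro δ hδ0 hδR j
    haveI : IsProbabilityMeasure (lam (εj j)) := hprob _ (hεjpos j)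
    set ν : Measure (EuclideanSpace ℝ (Fin d)) := lam (εj j) with hνdef
    have hSmeas : MeasurableSet {y : (EuclideanSpace ℝ (Fin d)) | δ < ‖y‖} :=
      measurableSet_lt measurable_const measurable_norm
    have haj : a j = ∫ y, Set.indicator B G y ∂ν := by
      rw [hadef, integral_indicator hBmeas]
    have hsub : a j - c j = ∫ y, (Set.indicator B G y - F (‖y‖⁻¹ • y)) ∂ν := by
      rw [haj, hcdef, ← integral_sub (hiG_int j) (hFp_int j)]
    have hq_int : Integrable (fun y => Set.indicator B G y - F (‖y‖⁻¹ • y)) ν :=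
      (hiG_int j).sub (hFp_int j)
    have hbound_int : Integrable (fun y : (EuclideanSpace ℝ (Fin d)) =>
        L * volR * δ + (2 * MB) * Set.indicator {y : (EuclideanSpace ℝ (Fin d)) | δ < ‖y‖} (fun _ => 1) y) ν := by
      apply Integrable.add (integrable_const _)
      apply Integrable.const_mul
      exact (integrable_const (1 : ℝ)).indicator hSmeas
    calc |a j - c j| = |∫ y, (Set.indicator B G y - F (‖y‖⁻¹ • y)) ∂ν| := by rw [hsub]
      _ ≤ ∫ y, |Set.indicator B G y - F (‖y‖⁻¹ • y)| ∂ν := by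
          rw [← Real.norm_eq_abs]
          exact (norm_integral_le_integral_norm _).trans (le_of_eq (by simp [Real.norm_eq_abs]))
      _ ≤ ∫ y, (L * volR * δ + (2 * MB) * Set.indicator {y : (EuclideanSpace ℝ (Fin d)) | δ < ‖y‖} (fun _ => 1) y) ∂ν := by
          refine integral_mono_ae hq_int.abs hbound_int ?_
          filter_upwards [hane j] with y hy
          exact hqb δ hδ0 hδR y hy
      _ = L * volR * δ + (2 * MB) * (ν {y : (EuclideanSpace ℝ (Fin d)) | δ < ‖y‖}).toReal := by
          rw [integral_add (integrable_const _)
            ((Integrable.const_mul ((integrable_const (1 : ℝ)).indicator hSmeas)) _)]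
          rw [integral_const, integral_const_mul, integral_indicator_const _ hSmeas]
          simp [measureReal_def]
  -- convergence of a to the limit
  have hdiff : Tendsto (fun j => a j - c j) atTop (𝓝 0) := by
    rw [NormedAddCommGroup.tendsto_nhds_zero]
    intro η hη
    set δ : ℝ := min R (η / (2 * (L * volR) + 2)) with hδdef
    have hδ0 : 0 < δ := lt_min hR (by positivity)
    have hδR : δ ≤ R := min_le_left _ _
    have h1 : L * volR * δ < η / 2 := by
      have hLv : 0 ≤ L * volR := mul_nonneg hL0 hvolR0
      have hδ2 : δ ≤ η / (2 * (L * volR) + 2) := min_le_right _ _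
      have h3 : L * volR * δ ≤ L * volR * (η / (2 * (L * volR) + 2)) :=
        mul_le_mul_of_nonneg_left hδ2 hLv
      have h4 : L * volR * (η / (2 * (L * volR) + 2)) < η / 2 := by
        have hpos : (0:ℝ) < 2 * (L * volR) + 2 := by positivity
        rw [mul_div_assoc', div_lt_div_iff₀ hpos (by norm_num : (0:ℝ) < 2)]
        nlinarith
      linarith
    have h2 : ∀ᶠ j in atTop,
        (2 * MB) * ((lam (εj j)) {x | δ < ‖x‖}).toReal < η / 2 := by
      have h3 : Tendsto (fun j => (2 * MB) * ((lam (εj j)) {x | δ < ‖x‖}).toReal)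
          atTop (𝓝 0) := by
        simpa using (htt δ hδ0).const_mul (2 * MB)
      have := h3.eventually (eventually_lt_nhds (by positivity : (0:ℝ) < η / 2))
      exact this
    filter_upwards [h2] with j hj
    rw [Real.norm_eq_abs]
    calc |a j - c j| ≤ L * volR * δ + (2 * MB) * ((lam (εj j)) {x | δ < ‖x‖}).toReal :=
          hest δ hδ0 hδR j
      _ < η / 2 + η / 2 := by linarith
      _ = η := by ring
  have ha : Tendsto a atTop (𝓝 (∫ θ, F θ ∂μ)) := by
    have : a = fun j => (a j - c j) + c j := funext fun j => by ring
    rw [this]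
    simpa using hdiff.add hc
  -- conclude
  rw [hRHS]
  have hgoal := (ENNReal.continuous_ofReal.tendsto _).comp ha
  simp only [Function.comp_def] at hgoal
  simp only [hLHS]
  exact hgoal
end
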